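/- arXiv:1903.05055 — 4 statements merged into one kernel-verified Lean document; each statement's English description precedes it below -/
import Mathlib

section
/- Fix an integer k ≥ 0 and ε > 0, and let p ≤ n^{-1/(k+1)-ε}. If X is a random clique complex distributed as X(n,p), then with high probability every strongly connected, pure (k+1)-dimensional subcomplex S of X has a vertex of degree at most 2k+1 in S. -/
open Finset

/-! Basic definitions for finite abstract simplicial complexes, viewed as
downward-closed families of nonempty finite sets of vertices. -/

variable {V : Type*} [DecidableEq V]

/-- `K` is an abstract simplicial complex: every face is nonempty, and `K` is
closed under taking nonempty subsets. -/
def IsComplex (K : Set (Finset V)) : Prop :=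
  (∀ σ ∈ K, σ.Nonempty) ∧ ∀ σ ∈ K, ∀ τ : Finset V, τ ⊆ σ → τ.Nonempty → τ ∈ K

/-- `τ` is a maximal face (facet) of `K`. -/
def IsMaximalFace (K : Set (Finset V)) (τ : Finset V) : Prop :=
  τ ∈ K ∧ ∀ η ∈ K, τ ⊆ η → η = τ

/-- `σ` is a free face of the maximal face `τ` in `K`: `σ ⊊ τ`, `τ` is maximal,
and `τ` is the only maximal face of `K` containing `σ`. -/
def IsFreeFace (K : Set (Finset V)) (σ τ : Finset V) : Prop :=
  σ ∈ K ∧ IsMaximalFace K τ ∧ σ ⊂ τ ∧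
    ∀ η : Finset V, IsMaximalFace K η → σ ⊆ η → η = τ

/-- One simplicial collapse: remove all faces `η` with `σ ⊆ η ⊆ τ`, where `σ` is a
free face of `τ`. -/
def CollapseStep (K K' : Set (Finset V)) : Prop :=
  ∃ σ τ : Finset V, IsFreeFace K σ τ ∧ K' = K \ {η | σ ⊆ η ∧ η ⊆ τ}

/-- `K` collapses to `K'` by a finite sequence of simplicial collapses. -/
def CollapsesTo (K K' : Set (Finset V)) : Prop :=
  Relation.ReflTransGen CollapseStep K K'

/-- `K` is `k`-collapsible: it collapses to a complex of dimension at most `k - 1`,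
i.e. in which every face has at most `k` vertices. -/
def Collapsible (k : ℕ) (K : Set (Finset V)) : Prop :=
  ∃ K' : Set (Finset V), CollapsesTo K K' ∧ ∀ σ ∈ K', σ.card ≤ k

/-- `K` is a clique (flag) complex: it is a simplicial complex, and any nonempty
finite vertex set whose 1-skeleton (vertices and edges) lies in `K` is a face of `K`. -/
def IsCliqueComplex (K : Set (Finset V)) : Prop :=
  IsComplex K ∧ ∀ σ : Finset V, σ.Nonempty →
    (∀ τ : Finset V, τ ⊆ σ → τ.Nonempty → τ.card ≤ 2 → τ ∈ K) → σ ∈ K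

/-- The flag closure of `S`: add every simplex whose 1-skeleton lies in `S`;
equivalently, the clique complex of the 1-skeleton of `S`. -/
def flagClosure (S : Set (Finset V)) : Set (Finset V) :=
  S ∪ {σ : Finset V | σ.Nonempty ∧
    ∀ τ : Finset V, τ ⊆ σ → τ.Nonempty → τ.card ≤ 2 → τ ∈ S}

/-- `S` is pure `d`-dimensional: it is nonempty and all its maximal faces have
dimension `d` (i.e. `d + 1` vertices). -/
def IsPure (S : Set (Finset V)) (d : ℕ) : Prop :=
  S.Nonempty ∧ ∀ τ : Finset V, IsMaximalFace S τ → τ.card = d + 1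

/-- Two `d`-dimensional faces of `S` are adjacent if they share a `(d-1)`-dimensional face. -/
def FacetAdj (S : Set (Finset V)) (d : ℕ) (σ τ : Finset V) : Prop :=
  σ ∈ S ∧ τ ∈ S ∧ σ.card = d + 1 ∧ τ.card = d + 1 ∧ (σ ∩ τ).card = d

/-- A pure `d`-dimensional complex is strongly connected if any two `d`-faces are
joined by a chain of `d`-faces in which consecutive faces share a `(d-1)`-face. -/
def StronglyConnected (S : Set (Finset V)) (d : ℕ) : Prop :=
  ∀ σ ∈ S, ∀ τ ∈ S, σ.card = d + 1 → τ.card = d + 1 →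
    Relation.ReflTransGen (FacetAdj S d) σ τ

/-- A relevant `d`-subcomplex of `X`: a subcomplex that is pure `d`-dimensional
and strongly connected. -/
def IsRelevant (X S : Set (Finset V)) (d : ℕ) : Prop :=
  S ⊆ X ∧ IsComplex S ∧ IsPure S d ∧ StronglyConnected S d

/-- A maximal relevant `d`-subcomplex of `X`: a relevant `d`-subcomplex not properly
contained in any other relevant `d`-subcomplex of `X`. -/
def IsMaxRelevant (X S : Set (Finset V)) (d : ℕ) : Prop :=
  IsRelevant X S d ∧ ∀ T : Set (Finset V), IsRelevant X T d → S ⊆ T → T = S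

/-- The degree of a vertex `v` in `S`: the number of vertices adjacent to `v`
in the 1-skeleton of `S`. -/
noncomputable def degreeIn (S : Set (Finset V)) (v : V) : ℕ :=
  {w : V | w ≠ v ∧ ({v, w} : Finset V) ∈ S}.ncard

/-- The link of a vertex `v` in `K`. -/
def link (K : Set (Finset V)) (v : V) : Set (Finset V) :=
  {σ : Finset V | σ ∈ K ∧ v ∉ σ ∧ insert v σ ∈ K}

/-- The star of a face `σ` in `K`. -/
def star (K : Set (Finset V)) (σ : Finset V) : Set (Finset V) :=
  {τ ∈ K | σ ⊆ τ}

/-- The vertex support of `S`. -/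
def vsupp (S : Set (Finset V)) : Set V := {v : V | ∃ σ ∈ S, v ∈ σ}

open scoped ENNReal

/-! Random clique complexes: the Erdős–Rényi random graph and its clique complex. -/

/-- The graph on `Fin n` determined by an indicator of edges. -/
def graphOf {n : ℕ} (ω : Sym2 (Fin n) → Bool) : SimpleGraph (Fin n) :=
  SimpleGraph.fromRel (fun u v => ω s(u, v) = true)

/-- The clique complex of a graph `G`: faces are the nonempty finite cliques of `G`. -/
def cliqueComplexOf {W : Type*} (G : SimpleGraph W) : Set (Finset W) :=
  {σ : Finset W | σ.Nonempty ∧ G.IsClique (σ : Set W)}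

/-- The Erdős–Rényi measure `G(n,p)`: each of the possible edges on `{1, …, n}`
appears independently with probability `p`. -/
noncomputable def erdosRenyi (n : ℕ) (p : ℝ≥0∞) (hp : p ≤ 1) :
    MeasureTheory.Measure (Sym2 (Fin n) → Bool) :=
  MeasureTheory.Measure.pi fun _ => (PMF.ofFintype (fun b => cond b p (1 - p)) (by simp [hp])).toMeasure


-- ### aux begins

variable {n : ℕ}

lemma adj_true {ω : Sym2 (Fin n) → Bool} {a b : Fin n} (h : (graphOf ω).Adj a b) :
    ω s(a, b) = true := by
  rw [graphOf, SimpleGraph.fromRel_adj] at h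
  rcases h.2 with h' | h'
  · exact h'
  · rwa [Sym2.eq_swap]

lemma mem_clique_adj {ω : Sym2 (Fin n) → Bool} {τ : Finset (Fin n)}
    (hτ : τ ∈ cliqueComplexOf (graphOf ω)) {a b : Fin n}
    (ha : a ∈ τ) (hb : b ∈ τ) (hab : a ≠ b) : ω s(a, b) = true :=
  adj_true (hτ.2 (Finset.mem_coe.2 ha) (Finset.mem_coe.2 hb) hab)

lemma singleton_mem {S : Set (Finset (Fin n))} (hc : IsComplex S) {σ : Finset (Fin n)}
    (hσ : σ ∈ S) {v : Fin n} (hv : v ∈ σ) : ({v} : Finset (Fin n)) ∈ S :=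
  hc.2 σ hσ {v} (Finset.singleton_subset_iff.2 hv) (Finset.singleton_nonempty v)

lemma exists_facet {S : Set (Finset (Fin n))} {k : ℕ} (hp : IsPure S (k + 1))
    {σ : Finset (Fin n)} (hσ : σ ∈ S) : ∃ τ ∈ S, σ ⊆ τ ∧ τ.card = k + 2 := by
  obtain ⟨τ, hτ, hmax⟩ := Set.Finite.exists_maximalFor Finset.card {η ∈ S | σ ⊆ η}
    (Set.toFinite _) ⟨σ, hσ, subset_rfl⟩
  have hmf : IsMaximalFace S τ := by
    refine ⟨hτ.1, fun η hη hsub => ?_⟩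
    have hcc := hmax ⟨hη, hτ.2.trans hsub⟩ (Finset.card_le_card hsub)
    exact (Finset.eq_of_subset_of_card_le hsub hcc.ge).symm
  have := hp.2 τ hmf
  exact ⟨τ, hτ.1, hτ.2, by omega⟩

lemma chain_escape {k : ℕ} {ω : Sym2 (Fin n) → Bool} {S : Set (Finset (Fin n))}
    (hSX : S ⊆ cliqueComplexOf (graphOf ω)) (hc : IsComplex S) (hp : IsPure S (k + 1))
    (hsc : StronglyConnected S (k + 1)) {σ₀ : Finset (Fin n)} (hσ₀S : σ₀ ∈ S)
    (hσ₀c : σ₀.card = k + 2) {U : Finset (Fin n)} (hσ₀U : σ₀ ⊆ U)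
    {u : Fin n} (huS : ({u} : Finset (Fin n)) ∈ S) (huU : u ∉ U) :
    ∃ w, w ∉ U ∧ ({w} : Finset (Fin n)) ∈ S ∧ ∃ T : Finset (Fin n), T ⊆ U ∧
      T.card = k + 1 ∧ ∀ a ∈ T, ω s(a, w) = true := by
  obtain ⟨τu, hτuS, hsubu, hτuc⟩ := exists_facet hp huS
  have hchain : Relation.ReflTransGen (FacetAdj S (k + 1)) σ₀ τu :=
    hsc σ₀ hσ₀S τu hτuS (by omega) (by omega)
  have key : ∀ τ, Relation.ReflTransGen (FacetAdj S (k + 1)) σ₀ τ →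
      τ ⊆ U ∨ ∃ α β, FacetAdj S (k + 1) α β ∧ α ⊆ U ∧ ¬β ⊆ U := by
    intro τ h
    induction h with
    | refl => exact Or.inl hσ₀U
    | @tail b c hab hbc ih =>
      rcases ih with hb | hw
      · by_cases hcU : c ⊆ U
        · exact Or.inl hcU
        · exact Or.inr ⟨b, c, hbc, hb, hcU⟩
      · exact Or.inr hw
  have hτuU : ¬ τu ⊆ U := fun hh => huU (hh (hsubu (Finset.mem_singleton_self u)))
  rcases key τu hchain with h | ⟨α, β, hadj, hαU, hβU⟩
  · exact absurd h hτuU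
  obtain ⟨hαS, hβS, hαc, hβc, hicard⟩ := hadj
  obtain ⟨w, hwβ, hwU⟩ := Finset.not_subset.1 hβU
  refine ⟨w, hwU, singleton_mem hc hβS hwβ, α ∩ β, (Finset.inter_subset_left).trans hαU,
    hicard, fun a ha => ?_⟩
  have haβ : a ∈ β := Finset.mem_of_mem_inter_right ha
  have hane : a ≠ w := fun h => hwU (h ▸ hαU (Finset.mem_of_mem_inter_left ha))
  exact mem_clique_adj (hSX hβS) haβ hwβ hane

noncomputable def V0 (S : Set (Finset (Fin n))) : Finset (Fin n) :=
  @Finset.filter _ (fun v => ({v} : Finset (Fin n)) ∈ S) (Classical.decPred _) Finset.univ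

lemma mem_V0 {S : Set (Finset (Fin n))} {v : Fin n} :
    v ∈ V0 S ↔ ({v} : Finset (Fin n)) ∈ S := by
  simp [V0]

lemma ext_list {k : ℕ} {ω : Sym2 (Fin n) → Bool} {S : Set (Finset (Fin n))}
    (hSX : S ⊆ cliqueComplexOf (graphOf ω)) (hc : IsComplex S) (hp : IsPure S (k + 1))
    (hsc : StronglyConnected S (k + 1)) {σ₀ : Finset (Fin n)} (hσ₀S : σ₀ ∈ S)
    (hσ₀c : σ₀.card = k + 2) (v₀ : Fin n) :
    ∀ t, k + 2 + t ≤ (V0 S).card → ∃ l : List (Fin n), l.length = k + 2 + t ∧ l.Nodup ∧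
      (∀ a ∈ l, ({a} : Finset (Fin n)) ∈ S) ∧ σ₀ ⊆ l.toFinset ∧
      ∀ j, k + 2 ≤ j → j < l.length →
        ∃ T : Finset ℕ, T.card = k + 1 ∧ (∀ i ∈ T, i < j) ∧
          ∀ i ∈ T, ω s(l.getD i v₀, l.getD j v₀) = true := by
  intro t
  induction t with
  | zero =>
    intro _
    refine ⟨σ₀.toList, by simp [hσ₀c], Finset.nodup_toList σ₀, ?_, by simp, ?_⟩
    · intro a ha
      exact singleton_mem hc hσ₀S (Finset.mem_toList.1 ha)
    · intro j hj hjl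
      rw [Finset.length_toList, hσ₀c] at hjl
      omega
  | succ t ih =>
    intro hle
    obtain ⟨l, hlen, hnd, hmemS, hσ₀l, hprop⟩ := ih (by omega)
    have hUV : l.toFinset ⊆ V0 S := by
      intro a ha
      exact mem_V0.2 (hmemS a (List.mem_toFinset.1 ha))
    have hUcard : l.toFinset.card = k + 2 + t := by
      rw [List.toFinset_card_of_nodup hnd, hlen]
    have hns : ¬ V0 S ⊆ l.toFinset := by
      intro h
      have := Finset.card_le_card h
      omega
    obtain ⟨u, huV, huU⟩ := Finset.not_subset.1 hns
    obtain ⟨w, hwU, hwS, T, hTU, hTcard, hTadj⟩ :=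
      chain_escape hSX hc hp hsc hσ₀S hσ₀c hσ₀l (mem_V0.1 huV) huU
    refine ⟨l ++ [w], by simp [hlen]; omega, ?_, ?_, ?_, ?_⟩
    · rw [List.nodup_append]
      exact ⟨hnd, List.nodup_singleton w, by
        intro a ha b hb hab
        rw [List.mem_singleton] at hb
        subst hb; subst hab
        exact hwU (List.mem_toFinset.2 ha)⟩
    · intro a ha
      rcases List.mem_append.1 ha with h | h
      · exact hmemS a h
      · rw [List.mem_singleton] at h; exact h ▸ hwS
    · refine hσ₀l.trans ?_
      intro x hx
      simp only [List.toFinset_append, Finset.mem_union]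
      exact Or.inl hx
    · intro j hj hjl
      simp only [List.length_append, List.length_singleton] at hjl
      rcases Nat.lt_succ_iff_lt_or_eq.1 hjl with hlt | heq
      · obtain ⟨T', hT'c, hT'lt, hT'adj⟩ := hprop j hj hlt
        refine ⟨T', hT'c, hT'lt, fun i hi => ?_⟩
        have hi' : i < l.length := lt_trans (hT'lt i hi) hlt
        rw [List.getD_append _ _ _ _ hi', List.getD_append _ _ _ _ hlt]
        exact hT'adj i hi
      · -- new facet
        refine ⟨T.image (fun a => l.idxOf a), ?_, ?_, ?_⟩
        · rw [Finset.card_image_of_injOn, hTcard]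
          intro a ha b hb hab
          have ha' : a ∈ l := List.mem_toFinset.1 (hTU ha)
          have hb' : b ∈ l := List.mem_toFinset.1 (hTU hb)
          rwa [List.idxOf_inj ha'] at hab
        · intro i hi
          obtain ⟨a, ha, rfl⟩ := Finset.mem_image.1 hi
          have ha' : a ∈ l := List.mem_toFinset.1 (hTU ha)
          rw [heq]
          exact List.idxOf_lt_length_iff.2 ha'
        · intro i hi
          obtain ⟨a, ha, rfl⟩ := Finset.mem_image.1 hi
          have ha' : a ∈ l := List.mem_toFinset.1 (hTU ha)
          have hidx : l.idxOf a < l.length := List.idxOf_lt_length_iff.2 ha'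
          have h1 : (l ++ [w]).getD (l.idxOf a) v₀ = a := by
            rw [List.getD_append _ _ _ _ hidx, List.getD_eq_getElem _ _ hidx]
            exact List.getElem_idxOf hidx
          have h2 : (l ++ [w]).getD j v₀ = w := by
            rw [heq, List.getD_eq_getElem _ _ (by simp), List.getElem_concat_length]
            rfl
          rw [h1, h2]
          exact hTadj a ha

lemma V0_nonempty {k : ℕ} {S : Set (Finset (Fin n))} (hc : IsComplex S) (hp : IsPure S (k + 1)) :
    (V0 S).Nonempty := by
  obtain ⟨σ, hσ⟩ := hp.1
  obtain ⟨v, hv⟩ := hc.1 σ hσ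
  exact ⟨v, mem_V0.2 (singleton_mem hc hσ hv)⟩

lemma bad_small_witness {k : ℕ} {ω : Sym2 (Fin n) → Bool} {S : Set (Finset (Fin n))}
    (hSX : S ⊆ cliqueComplexOf (graphOf ω)) (hc : IsComplex S)
    (hdeg : ∀ v : Fin n, ({v} : Finset (Fin n)) ∈ S → 2 * k + 2 ≤ degreeIn S v) :
    ∃ E : Finset (Sym2 (Fin n)), E ⊆ (V0 S).sym2 ∧
      (k + 1) * (V0 S).card ≤ E.card ∧ ∀ e ∈ E, ω e = true := by
  classical
  set W := V0 S with hW
  set D := (W ×ˢ W).filter (fun q => q.1 ≠ q.2 ∧ ({q.1, q.2} : Finset (Fin n)) ∈ S) with hD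
  have fiber_eq : ∀ v ∈ W, D.filter (fun q => q.1 = v) =
      (W.filter (fun u => u ≠ v ∧ ({v, u} : Finset (Fin n)) ∈ S)).image (fun u => (v, u)) := by
    intro v hv
    ext q
    simp only [hD, Finset.mem_filter, Finset.mem_product, Finset.mem_image]
    constructor
    · rintro ⟨⟨⟨haW, hbW⟩, hne, hS⟩, h1⟩
      refine ⟨q.2, ⟨hbW, fun h => hne (h1 ▸ h.symm), h1 ▸ hS⟩, ?_⟩
      rw [← h1]
    · rintro ⟨u, ⟨huW, hune, huS⟩, rfl⟩
      exact ⟨⟨⟨hv, huW⟩, fun h => hune h.symm, huS⟩, rfl⟩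
  have hdegW : ∀ v ∈ W, 2 * k + 2 ≤ (W.filter (fun u => u ≠ v ∧ ({v, u} : Finset (Fin n)) ∈ S)).card := by
    intro v hv
    have hset : {w : Fin n | w ≠ v ∧ ({v, w} : Finset (Fin n)) ∈ S} =
        ↑(W.filter (fun u => u ≠ v ∧ ({v, u} : Finset (Fin n)) ∈ S)) := by
      ext u
      simp only [Set.mem_setOf_eq, Finset.coe_filter, Finset.mem_coe]
      constructor
      · rintro ⟨hne, hS⟩
        exact ⟨mem_V0.2 (singleton_mem hc hS (by simp)), hne, hS⟩
      · rintro ⟨_, hne, hS⟩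
        exact ⟨hne, hS⟩
    have := hdeg v (mem_V0.1 hv)
    rwa [degreeIn, hset, Set.ncard_coe_finset] at this
  have hDcard : (2 * k + 2) * W.card ≤ D.card := by
    have hmap : ∀ q ∈ D, q.1 ∈ W := by
      rintro ⟨a, b⟩ hq
      simp only [hD, Finset.mem_filter, Finset.mem_product] at hq
      exact hq.1.1
    rw [Finset.card_eq_sum_card_fiberwise hmap]
    calc (2 * k + 2) * W.card = ∑ _v ∈ W, (2 * k + 2) := by
          rw [Finset.sum_const, smul_eq_mul, mul_comm]
      _ ≤ _ := by
          refine Finset.sum_le_sum fun v hv => ?_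
          rw [fiber_eq v hv, Finset.card_image_of_injective _ (fun a b h => by
            simpa using congrArg Prod.snd h)]
          exact hdegW v hv
  set E := D.image (Function.uncurry Sym2.mk) with hE
  have hDE : D.card ≤ 2 * E.card := by
    refine Finset.card_le_mul_card_image D 2 ?_
    rintro e he
    obtain ⟨⟨x, y⟩, hxy, rfl⟩ := Finset.mem_image.1 he
    have hsub : D.filter (fun q => Function.uncurry Sym2.mk q = Function.uncurry Sym2.mk (x, y)) ⊆ {(x, y), (y, x)} := by
      rintro ⟨c, d⟩ hcd
      simp only [Finset.mem_filter] at hcd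
      have := Sym2.eq_iff.1 hcd.2
      simp only [Finset.mem_insert, Finset.mem_singleton, Prod.mk.injEq]
      tauto
    calc (D.filter (fun q => Function.uncurry Sym2.mk q = Function.uncurry Sym2.mk (x, y))).card
        ≤ ({(x, y), (y, x)} : Finset ((Fin n) × (Fin n))).card := Finset.card_le_card hsub
      _ ≤ 2 := (Finset.card_insert_le _ _).trans (by simp)
  have hfin : (k + 1) * W.card ≤ E.card := by
    have h2 : 2 * ((k + 1) * W.card) ≤ 2 * E.card := by
      calc 2 * ((k + 1) * W.card) = (2 * k + 2) * W.card := by ring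
        _ ≤ D.card := hDcard
        _ ≤ 2 * E.card := hDE
    exact Nat.le_of_mul_le_mul_left h2 (by norm_num)
  refine ⟨E, ?_, hfin, ?_⟩
  · intro e he
    obtain ⟨⟨a, b⟩, hab, rfl⟩ := Finset.mem_image.1 he
    simp only [hD, Finset.mem_filter, Finset.mem_product] at hab
    exact Finset.mk_mem_sym2_iff.2 ⟨hab.1.1, hab.1.2⟩
  · intro e he
    obtain ⟨⟨a, b⟩, hab, rfl⟩ := Finset.mem_image.1 he
    simp only [hD, Finset.mem_filter, Finset.mem_product] at hab
    exact mem_clique_adj (hSX hab.2.2) (by simp) (by simp) hab.2.1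

def edgesA (k a₀ : ℕ) (f : Fin (k + 2 + a₀) → Fin n) (g : Fin a₀ → Finset (Fin (k + 2 + a₀))) :
    Finset (Sym2 (Fin n)) :=
  Finset.univ.biUnion fun t : Fin a₀ =>
    (g t).image fun i => s(f i, f ⟨k + 2 + t, by have := t.isLt; omega⟩)

lemma edgesA_card {k a₀ : ℕ} {f : Fin (k + 2 + a₀) → Fin n}
    {g : Fin a₀ → Finset (Fin (k + 2 + a₀))} (hf : Function.Injective f)
    (hg : ∀ t : Fin a₀, (g t).card = k + 1 ∧ ∀ i ∈ g t, (i : ℕ) < k + 2 + t) :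
    (edgesA k a₀ f g).card = a₀ * (k + 1) := by
  rw [edgesA, Finset.card_biUnion]
  · have heach : ∀ t : Fin a₀,
        ((g t).image fun i => s(f i, f ⟨k + 2 + t, by have := t.isLt; omega⟩)).card = k + 1 := by
      intro t
      rw [Finset.card_image_of_injOn, (hg t).1]
      intro i hi i' hi' hii
      rcases Sym2.eq_iff.1 hii with ⟨h1, _⟩ | ⟨h1, h2⟩
      · exact hf h1
      · exfalso
        have hval : (i : ℕ) = k + 2 + (t : ℕ) := congrArg Fin.val (hf h1)
        have := (hg t).2 i hi
        omega
    simp only [heach, Finset.sum_const, Finset.card_univ, Fintype.card_fin, smul_eq_mul]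
  · intro t _ t' _ htt
    refine Finset.disjoint_left.2 fun e he he' => ?_
    obtain ⟨i, hi, rfl⟩ := Finset.mem_image.1 he
    obtain ⟨i', hi', heq⟩ := Finset.mem_image.1 he'
    have hit := (hg t).2 i hi
    have hit' := (hg t').2 i' hi'
    rcases Sym2.eq_iff.1 heq with ⟨h1, h2⟩ | ⟨h1, h2⟩
    · have := hf h2
      apply htt
      have : k + 2 + (t' : ℕ) = k + 2 + (t : ℕ) := congrArg Fin.val this
      exact Fin.ext (by omega)
    · have e1 := hf h1
      have e2 := hf h2
      have : (i' : ℕ) = k + 2 + t := congrArg Fin.val e1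
      have : (i : ℕ) = k + 2 + t' := congrArg Fin.val e2.symm
      omega

def cylSet (E : Finset (Sym2 (Fin n))) : Set (Sym2 (Fin n) → Bool) :=
  {ω | ∀ e ∈ E, ω e = true}

def edgesB {q : ℕ} (f : Fin q → Fin n) (E : Finset (Sym2 (Fin q))) : Finset (Sym2 (Fin n)) :=
  E.image (Sym2.map f)

abbrev IdxA (n k a₀ : ℕ) := (Fin (k + 2 + a₀) → Fin n) × (Fin a₀ → Finset (Fin (k + 2 + a₀)))

abbrev IdxB (n k a₀ : ℕ) :=
  Σ v : Fin (k + 2 + a₀), (Fin ((v : ℕ) + 1) → Fin n) × Finset (Sym2 (Fin ((v : ℕ) + 1)))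

def setA (k a₀ : ℕ) (i : IdxA n k a₀) : Set (Sym2 (Fin n) → Bool) :=
  if (k + 1) * a₀ ≤ (edgesA k a₀ i.1 i.2).card then cylSet (edgesA k a₀ i.1 i.2) else ∅

def setB (k a₀ : ℕ) (j : IdxB n k a₀) : Set (Sym2 (Fin n) → Bool) :=
  if (k + 1) * ((j.1 : ℕ) + 1) ≤ (edgesB j.2.1 j.2.2).card then cylSet (edgesB j.2.1 j.2.2)
  else ∅

lemma bad_subset (k a₀ : ℕ) :
    {ω : Sym2 (Fin n) → Bool | ∃ S : Set (Finset (Fin n)),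
      S ⊆ cliqueComplexOf (graphOf ω) ∧ IsComplex S ∧ IsPure S (k + 1) ∧
      StronglyConnected S (k + 1) ∧
      ∀ v : Fin n, ({v} : Finset (Fin n)) ∈ S → 2 * k + 2 ≤ degreeIn S v}
    ⊆ (⋃ i : IdxA n k a₀, setA k a₀ i) ∪ ⋃ j : IdxB n k a₀, setB k a₀ j := by
  classical
  rintro ω ⟨S, hSX, hc, hpure, hsc, hdeg⟩
  by_cases hbig : k + 2 + a₀ ≤ (V0 S).card
  · -- large case
    obtain ⟨σ, hσ⟩ := hpure.1
    obtain ⟨σ₀, hσ₀S, _, hσ₀c⟩ := exists_facet hpure hσ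
    obtain ⟨v₀, hv₀⟩ := hc.1 σ₀ hσ₀S
    obtain ⟨l, hlen, hnd, _, _, hprop⟩ :=
      ext_list hSX hc hpure hsc hσ₀S hσ₀c v₀ a₀ hbig
    have H : ∀ t : Fin a₀, ∃ T : Finset ℕ, T.card = k + 1 ∧ (∀ i ∈ T, i < k + 2 + t) ∧
        ∀ i ∈ T, ω s(l.getD i v₀, l.getD (k + 2 + t) v₀) = true :=
      fun t => hprop (k + 2 + t) (by omega) (by rw [hlen]; have := t.isLt; omega)
    choose T hT1 hT2 hT3 using H
    set f : Fin (k + 2 + a₀) → Fin n := fun i => l.get (Fin.cast hlen.symm i) with hf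
    have hfinj : Function.Injective f :=
      (List.nodup_iff_injective_get.1 hnd).comp (Fin.cast_injective _)
    have hfg : ∀ i : Fin (k + 2 + a₀), f i = l.getD (i : ℕ) v₀ := by
      intro i
      rw [List.getD_eq_getElem _ _ (by rw [hlen]; exact i.isLt)]
      rfl
    set g : Fin a₀ → Finset (Fin (k + 2 + a₀)) := fun t =>
      (T t).attachFin (fun i hi => by have := hT2 t i hi; have := t.isLt; omega) with hgdef
    have hg : ∀ t : Fin a₀, (g t).card = k + 1 ∧ ∀ i ∈ g t, (i : ℕ) < k + 2 + t := by
      intro t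
      constructor
      · rw [hgdef]; rw [Finset.card_attachFin]; exact hT1 t
      · intro i hi
        exact hT2 t i ((Finset.mem_attachFin _).1 hi)
    have hcard := edgesA_card hfinj hg
    refine Or.inl (Set.mem_iUnion.2 ⟨(f, g), ?_⟩)
    rw [setA, if_pos (le_of_eq (by rw [hcard, Nat.mul_comm]))]
    intro e he
    obtain ⟨t, -, he⟩ := Finset.mem_biUnion.1 he
    dsimp only at he
    obtain ⟨i, hi, rfl⟩ := Finset.mem_image.1 he
    have hiT : (i : ℕ) ∈ T t := (Finset.mem_attachFin _).1 hi
    have := hT3 t (i : ℕ) hiT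
    rw [hfg i, hfg ⟨k + 2 + t, by have := t.isLt; omega⟩]
    exact this
  · -- small case
    push_neg at hbig
    have h1 : 1 ≤ (V0 S).card := Finset.card_pos.2 (V0_nonempty hc hpure)
    obtain ⟨E, hEsub, hEcard, hEtrue⟩ := bad_small_witness hSX hc hdeg
    set v : Fin (k + 2 + a₀) := ⟨(V0 S).card - 1, by omega⟩ with hv
    have horder : (V0 S).card = (v : ℕ) + 1 := by rw [hv]; simp; omega
    set φ := (V0 S).orderIsoOfFin horder with hφ
    set f : Fin ((v : ℕ) + 1) → Fin n := fun i => (φ i : Fin n) with hfdef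
    set E' : Finset (Sym2 (Fin ((v : ℕ) + 1))) :=
      Finset.univ.filter (fun e' => Sym2.map f e' ∈ E) with hE'
    have hEB : E ⊆ edgesB f E' := by
      intro e he
      have hesym : e ∈ (V0 S).sym2 := hEsub he
      revert he hesym
      refine Sym2.ind (fun a b => ?_) e
      intro he hesym
      have hab := Finset.mk_mem_sym2_iff.1 hesym
      set ia := φ.symm ⟨a, hab.1⟩ with hia
      set ib := φ.symm ⟨b, hab.2⟩ with hib
      have hfa : f ia = a := by rw [hfdef]; simp [hia]
      have hfb : f ib = b := by rw [hfdef]; simp [hib]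
      refine Finset.mem_image.2 ⟨s(ia, ib), ?_, ?_⟩
      · rw [hE', Finset.mem_filter]
        refine ⟨Finset.mem_univ _, ?_⟩
        rw [Sym2.map_pair_eq, hfa, hfb]
        exact he
      · rw [Sym2.map_pair_eq, hfa, hfb]
    refine Or.inr (Set.mem_iUnion.2 ⟨⟨v, f, E'⟩, ?_⟩)
    rw [setB, if_pos ?_]
    · intro e he
      obtain ⟨e', he', rfl⟩ := Finset.mem_image.1 he
      rw [hE', Finset.mem_filter] at he'
      exact hEtrue _ he'.2
    · calc (k + 1) * ((v : ℕ) + 1) = (k + 1) * (V0 S).card := by rw [← horder]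
        _ ≤ E.card := hEcard
        _ ≤ (edgesB f E').card := Finset.card_le_card hEB


open MeasureTheory in
instance erdosRenyi_prob (n : ℕ) (p : ℝ≥0∞) (hp : p ≤ 1) :
    IsProbabilityMeasure (erdosRenyi n p hp) := by
  unfold erdosRenyi
  infer_instance

open MeasureTheory in
lemma measure_cyl {n : ℕ} (p : ℝ≥0∞) (hp : p ≤ 1) (E : Finset (Sym2 (Fin n))) :
    erdosRenyi n p hp (cylSet E) = p ^ E.card := by
  classical
  have hset : cylSet E =
      Set.pi Set.univ (fun e => if e ∈ E then ({true} : Set Bool) else Set.univ) := by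
    ext ω
    simp only [cylSet, Set.mem_setOf_eq, Set.mem_pi, Set.mem_univ, forall_true_left]
    constructor
    · intro h e
      split_ifs with he
      · simp [h e he]
      · trivial
    · intro h e he
      have := h e
      rw [if_pos he] at this
      simpa using this
  rw [hset, erdosRenyi, MeasureTheory.Measure.pi_pi]
  have hb : ∀ e : Sym2 (Fin n),
      (PMF.ofFintype (fun b => cond b p (1 - p)) (by simp [hp])).toMeasure (if e ∈ E then ({true} : Set Bool) else Set.univ) =
      if e ∈ E then p else 1 := by
    intro e
    split_ifs
    · rw [PMF.toMeasure_apply_singleton _ _ (measurableSet_singleton _)]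
      rfl
    · simp only [measure_univ]
  simp_rw [hb]
  rw [Finset.prod_ite_mem Finset.univ E (fun _ => p), Finset.univ_inter, Finset.prod_const]

open MeasureTheory in
lemma measure_setA_le {n : ℕ} (k a₀ : ℕ) (p : ℝ≥0∞) (hp : p ≤ 1) (i : IdxA n k a₀) :
    erdosRenyi n p hp (setA k a₀ i) ≤ p ^ ((k + 1) * a₀) := by
  rw [setA]
  split_ifs with h
  · rw [measure_cyl]
    exact pow_le_pow_right_of_le_one' hp h
  · simp

open MeasureTheory in
lemma measure_setB_le {n : ℕ} (k a₀ : ℕ) (p : ℝ≥0∞) (hp : p ≤ 1) (j : IdxB n k a₀) :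
    erdosRenyi n p hp (setB k a₀ j) ≤ p ^ ((k + 1) * ((j.1 : ℕ) + 1)) := by
  rw [setB]
  split_ifs with h
  · rw [measure_cyl]
    exact pow_le_pow_right_of_le_one' hp h
  · simp

open MeasureTheory in
lemma measure_bad_le (n k a₀ : ℕ) (p : ℝ≥0∞) (hp : p ≤ 1) :
    erdosRenyi n p hp {ω : Sym2 (Fin n) → Bool | ∃ S : Set (Finset (Fin n)),
      S ⊆ cliqueComplexOf (graphOf ω) ∧ IsComplex S ∧ IsPure S (k + 1) ∧
      StronglyConnected S (k + 1) ∧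
      ∀ v : Fin n, ({v} : Finset (Fin n)) ∈ S → 2 * k + 2 ≤ degreeIn S v} ≤
    (Fintype.card (IdxA n k a₀) : ℝ≥0∞) * p ^ ((k + 1) * a₀) +
    ∑ v : Fin (k + 2 + a₀),
      (Fintype.card ((Fin ((v : ℕ) + 1) → Fin n) × Finset (Sym2 (Fin ((v : ℕ) + 1)))) : ℝ≥0∞) *
        p ^ ((k + 1) * ((v : ℕ) + 1)) := by
  refine (measure_mono (bad_subset k a₀)).trans ?_
  refine (measure_union_le _ _).trans ?_
  gcongr
  · -- A part
    refine (measure_iUnion_le _).trans ?_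
    rw [tsum_fintype]
    refine (Finset.sum_le_card_nsmul _ _ _ fun i _ => measure_setA_le k a₀ p hp i).trans ?_
    rw [nsmul_eq_mul, Finset.card_univ]
  · -- B part
    refine (measure_iUnion_le _).trans ?_
    rw [tsum_fintype]
    have : (Finset.univ : Finset (IdxB n k a₀)) =
        (Finset.univ : Finset (Fin (k + 2 + a₀))).sigma (fun _ => Finset.univ) :=
      (Finset.univ_sigma_univ).symm
    rw [this, Finset.sum_sigma]
    refine Finset.sum_le_sum fun v _ => ?_
    refine (Finset.sum_le_card_nsmul _ _ (p ^ ((k + 1) * ((v : ℕ) + 1))) fun j _ => measure_setB_le k a₀ p hp ⟨v, j⟩).trans ?_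
    rw [nsmul_eq_mul, Finset.card_univ]

lemma term_bound (k : ℕ) (ε : ℝ) (hε : 0 < ε) {n : ℕ} (hn : 1 ≤ n) {p : ℝ≥0∞}
    (hple : p ≤ (n : ℝ≥0∞) ^ (-(1 / ((k : ℝ) + 1)) - ε)) (q : ℕ) (hq : 1 ≤ q) :
    (n : ℝ≥0∞) ^ q * p ^ ((k + 1) * q) ≤ (n : ℝ≥0∞) ^ (-(((k : ℝ) + 1) * ε)) := by
  set N : ℝ≥0∞ := (n : ℝ≥0∞) with hN
  have hN1 : 1 ≤ N := by rw [hN]; exact_mod_cast hn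
  have hN0 : N ≠ 0 := by rw [hN]; exact_mod_cast Nat.one_le_iff_ne_zero.mp hn
  have hNt : N ≠ ⊤ := by rw [hN]; exact ENNReal.natCast_ne_top n
  have h1 : p ^ ((k + 1) * q) ≤ (N ^ (-(1 / ((k : ℝ) + 1)) - ε)) ^ ((k + 1) * q) :=
    pow_le_pow_left' hple _
  calc N ^ q * p ^ ((k + 1) * q) ≤ N ^ q * (N ^ (-(1 / ((k : ℝ) + 1)) - ε)) ^ ((k + 1) * q) := by
        exact mul_le_mul_right h1 _
    _ = N ^ ((q : ℝ) + (-(1 / ((k : ℝ) + 1)) - ε) * (((k + 1) * q : ℕ) : ℝ)) := by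
        rw [← ENNReal.rpow_natCast (N ^ (-(1 / ((k : ℝ) + 1)) - ε)) ((k + 1) * q),
          ← ENNReal.rpow_mul, ← ENNReal.rpow_natCast N q,
          ← ENNReal.rpow_add _ _ hN0 hNt]
    _ ≤ N ^ (-(((k : ℝ) + 1) * ε)) := by
        refine ENNReal.rpow_le_rpow_of_exponent_le hN1 ?_
        have hK : (0 : ℝ) < (k : ℝ) + 1 := by positivity
        have hq' : (1 : ℝ) ≤ (q : ℝ) := by exact_mod_cast hq
        have hfrac : (1 / ((k : ℝ) + 1)) * ((k : ℝ) + 1) = 1 := by field_simp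
        push_cast
        nlinarith [mul_nonneg (mul_nonneg hK.le hε.le) (sub_nonneg.2 hq'), hfrac]

lemma termA_bound (k a₀ : ℕ) (ε : ℝ) (hε : 0 < ε)
    (ha₀ : ((k : ℝ) + 2) + (((k : ℝ) + 1) * ε) ≤ (((k : ℝ) + 1) * ε) * a₀) {n : ℕ} (hn : 1 ≤ n)
    {p : ℝ≥0∞} (hple : p ≤ (n : ℝ≥0∞) ^ (-(1 / ((k : ℝ) + 1)) - ε)) :
    (n : ℝ≥0∞) ^ (k + 2 + a₀) * p ^ ((k + 1) * a₀) ≤ (n : ℝ≥0∞) ^ (-(((k : ℝ) + 1) * ε)) := by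
  set N : ℝ≥0∞ := (n : ℝ≥0∞) with hN
  have hN1 : 1 ≤ N := by rw [hN]; exact_mod_cast hn
  have hN0 : N ≠ 0 := by rw [hN]; exact_mod_cast Nat.one_le_iff_ne_zero.mp hn
  have hNt : N ≠ ⊤ := by rw [hN]; exact ENNReal.natCast_ne_top n
  have h1 : p ^ ((k + 1) * a₀) ≤ (N ^ (-(1 / ((k : ℝ) + 1)) - ε)) ^ ((k + 1) * a₀) :=
    pow_le_pow_left' hple _
  calc N ^ (k + 2 + a₀) * p ^ ((k + 1) * a₀)
      ≤ N ^ (k + 2 + a₀) * (N ^ (-(1 / ((k : ℝ) + 1)) - ε)) ^ ((k + 1) * a₀) := by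
        exact mul_le_mul_right h1 _
    _ = N ^ (((k + 2 + a₀ : ℕ) : ℝ) + (-(1 / ((k : ℝ) + 1)) - ε) * (((k + 1) * a₀ : ℕ) : ℝ)) := by
        rw [← ENNReal.rpow_natCast (N ^ (-(1 / ((k : ℝ) + 1)) - ε)) ((k + 1) * a₀),
          ← ENNReal.rpow_mul, ← ENNReal.rpow_natCast N (k + 2 + a₀),
          ← ENNReal.rpow_add _ _ hN0 hNt]
    _ ≤ N ^ (-(((k : ℝ) + 1) * ε)) := by
        refine ENNReal.rpow_le_rpow_of_exponent_le hN1 ?_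
        have hK : (0 : ℝ) < (k : ℝ) + 1 := by positivity
        have hfrac : (1 / ((k : ℝ) + 1)) * ((k : ℝ) + 1) = 1 := by field_simp
        push_cast
        nlinarith [hfrac, ha₀]

open MeasureTheory in
lemma measure_bad_final (k a₀ : ℕ) (ε : ℝ) (hε : 0 < ε)
    (ha₀ : ((k : ℝ) + 2) + (((k : ℝ) + 1) * ε) ≤ (((k : ℝ) + 1) * ε) * a₀)
    (n : ℕ) (hn : 1 ≤ n) (p : ℝ≥0∞) (hp : p ≤ 1)
    (hple : p ≤ (n : ℝ≥0∞) ^ (-(1 / ((k : ℝ) + 1)) - ε)) :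
    erdosRenyi n p hp {ω : Sym2 (Fin n) → Bool | ∃ S : Set (Finset (Fin n)),
      S ⊆ cliqueComplexOf (graphOf ω) ∧ IsComplex S ∧ IsPure S (k + 1) ∧
      StronglyConnected S (k + 1) ∧
      ∀ v : Fin n, ({v} : Finset (Fin n)) ∈ S → 2 * k + 2 ≤ degreeIn S v} ≤
    (((2 ^ (k + 2 + a₀)) ^ a₀ + (k + 2 + a₀) * 2 ^ Nat.choose (k + 2 + a₀ + 1) 2 : ℕ) : ℝ≥0∞) *
      (n : ℝ≥0∞) ^ (-(((k : ℝ) + 1) * ε)) := by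
  refine (measure_bad_le n k a₀ p hp).trans ?_
  have hA : (Fintype.card (IdxA n k a₀) : ℝ≥0∞) =
      ((2 : ℝ≥0∞) ^ (k + 2 + a₀)) ^ a₀ * (n : ℝ≥0∞) ^ (k + 2 + a₀) := by
    rw [Fintype.card_prod, Fintype.card_fun, Fintype.card_fun, Fintype.card_finset,
      Fintype.card_fin, Fintype.card_fin, Fintype.card_fin]
    push_cast
    ring
  have hAle : (Fintype.card (IdxA n k a₀) : ℝ≥0∞) * p ^ ((k + 1) * a₀) ≤
      (((2 ^ (k + 2 + a₀)) ^ a₀ : ℕ) : ℝ≥0∞) * (n : ℝ≥0∞) ^ (-(((k : ℝ) + 1) * ε)) := by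
    rw [hA, mul_assoc]
    push_cast
    exact mul_le_mul_right (termA_bound k a₀ ε hε ha₀ hn hple) _
  have hBle : ∀ v : Fin (k + 2 + a₀),
      (Fintype.card ((Fin ((v : ℕ) + 1) → Fin n) × Finset (Sym2 (Fin ((v : ℕ) + 1)))) : ℝ≥0∞) *
        p ^ ((k + 1) * ((v : ℕ) + 1)) ≤
      ((2 ^ Nat.choose (k + 2 + a₀ + 1) 2 : ℕ) : ℝ≥0∞) * (n : ℝ≥0∞) ^ (-(((k : ℝ) + 1) * ε)) := by
    intro v
    have hcard : (Fintype.card ((Fin ((v : ℕ) + 1) → Fin n) ×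
        Finset (Sym2 (Fin ((v : ℕ) + 1)))) : ℝ≥0∞) ≤
        ((2 ^ Nat.choose (k + 2 + a₀ + 1) 2 : ℕ) : ℝ≥0∞) * (n : ℝ≥0∞) ^ ((v : ℕ) + 1) := by
      rw [Fintype.card_prod, Fintype.card_fun, Fintype.card_fin, Fintype.card_fin,
        Fintype.card_finset, Sym2.card, Fintype.card_fin]
      push_cast
      have h2 : Nat.choose ((v : ℕ) + 1 + 1) 2 ≤ Nat.choose (k + 2 + a₀ + 1) 2 :=
        Nat.choose_le_choose 2 (by have := v.isLt; omega)
      have h3 : (2 : ℝ≥0∞) ^ Nat.choose ((v : ℕ) + 1 + 1) 2 ≤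
          (2 : ℝ≥0∞) ^ Nat.choose (k + 2 + a₀ + 1) 2 :=
        pow_le_pow_right' (by norm_num : (1:ℝ≥0∞) ≤ 2) h2
      calc (n : ℝ≥0∞) ^ ((v : ℕ) + 1) * 2 ^ Nat.choose ((v : ℕ) + 1 + 1) 2
          ≤ (n : ℝ≥0∞) ^ ((v : ℕ) + 1) * 2 ^ Nat.choose (k + 2 + a₀ + 1) 2 :=
            mul_le_mul_right h3 _
        _ = 2 ^ Nat.choose (k + 2 + a₀ + 1) 2 * (n : ℝ≥0∞) ^ ((v : ℕ) + 1) := mul_comm _ _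
    calc (Fintype.card ((Fin ((v : ℕ) + 1) → Fin n) ×
        Finset (Sym2 (Fin ((v : ℕ) + 1)))) : ℝ≥0∞) * p ^ ((k + 1) * ((v : ℕ) + 1))
        ≤ ((2 ^ Nat.choose (k + 2 + a₀ + 1) 2 : ℕ) : ℝ≥0∞) * (n : ℝ≥0∞) ^ ((v : ℕ) + 1) *
            p ^ ((k + 1) * ((v : ℕ) + 1)) := mul_le_mul_left hcard _
      _ = ((2 ^ Nat.choose (k + 2 + a₀ + 1) 2 : ℕ) : ℝ≥0∞) *
            ((n : ℝ≥0∞) ^ ((v : ℕ) + 1) * p ^ ((k + 1) * ((v : ℕ) + 1))) := by ring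
      _ ≤ ((2 ^ Nat.choose (k + 2 + a₀ + 1) 2 : ℕ) : ℝ≥0∞) *
            (n : ℝ≥0∞) ^ (-(((k : ℝ) + 1) * ε)) :=
          mul_le_mul_right (term_bound k ε hε hn hple ((v : ℕ) + 1) (by omega)) _
  calc (Fintype.card (IdxA n k a₀) : ℝ≥0∞) * p ^ ((k + 1) * a₀) +
      ∑ v : Fin (k + 2 + a₀),
        (Fintype.card ((Fin ((v : ℕ) + 1) → Fin n) × Finset (Sym2 (Fin ((v : ℕ) + 1)))) : ℝ≥0∞) *
          p ^ ((k + 1) * ((v : ℕ) + 1))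
      ≤ (((2 ^ (k + 2 + a₀)) ^ a₀ : ℕ) : ℝ≥0∞) * (n : ℝ≥0∞) ^ (-(((k : ℝ) + 1) * ε)) +
        ∑ _v : Fin (k + 2 + a₀), ((2 ^ Nat.choose (k + 2 + a₀ + 1) 2 : ℕ) : ℝ≥0∞) *
          (n : ℝ≥0∞) ^ (-(((k : ℝ) + 1) * ε)) := by
        exact add_le_add hAle (Finset.sum_le_sum fun v _ => hBle v)
    _ = (((2 ^ (k + 2 + a₀)) ^ a₀ + (k + 2 + a₀) * 2 ^ Nat.choose (k + 2 + a₀ + 1) 2 : ℕ) : ℝ≥0∞) *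
        (n : ℝ≥0∞) ^ (-(((k : ℝ) + 1) * ε)) := by
        rw [Finset.sum_const, Finset.card_univ, Fintype.card_fin]
        push_cast
        ring

open Filter in
lemma tendsto_nat_rpow_neg {β : ℝ} (hβ : 0 < β) :
    Filter.Tendsto (fun n : ℕ => (n : ℝ≥0∞) ^ (-β)) Filter.atTop (nhds 0) := by
  have h0 : Filter.Tendsto (fun n : ℕ => ENNReal.ofReal ((n : ℝ) ^ (-β)))
      Filter.atTop (nhds 0) := by
    have h1 := (tendsto_rpow_neg_atTop hβ).comp (tendsto_natCast_atTop_atTop (R := ℝ))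
    have h2 := (ENNReal.continuous_ofReal.tendsto 0).comp h1
    simpa [Function.comp_def] using h2
  refine Filter.Tendsto.congr' ?_ h0
  filter_upwards [Filter.eventually_ge_atTop 1] with n hn
  have hpos : (0 : ℝ) < (n : ℝ) := by exact_mod_cast Nat.lt_of_lt_of_le Nat.zero_lt_one hn
  rw [← ENNReal.ofReal_rpow_of_pos hpos, ENNReal.ofReal_natCast]


open Filter MeasureTheory

/-- Fix `k ≥ 0` and `ε > 0`, and let `p ≤ n^(-1/(k+1) - ε)`. Then with
high probability, every strongly connected, pure `(k+1)`-dimensional subcomplex `S` of the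
random clique complex `X(n,p)` has a vertex of degree at most `2k + 1` in `S`. -/
theorem random_clique_complex_degree_condition (k : ℕ) (ε : ℝ) (hε : 0 < ε)
    (p : ℕ → ℝ≥0∞) (hp1 : ∀ n, p n ≤ 1)
    (hp : ∀ n : ℕ, p n ≤ (n : ℝ≥0∞) ^ (-(1 / ((k : ℝ) + 1)) - ε)) :
    Filter.Tendsto
      (fun n : ℕ => erdosRenyi n (p n) (hp1 n)
        {ω : Sym2 (Fin n) → Bool |
          ∀ S : Set (Finset (Fin n)), S ⊆ cliqueComplexOf (graphOf ω) → IsComplex S →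
            IsPure S (k + 1) → StronglyConnected S (k + 1) →
            ∃ v : Fin n, ({v} : Finset (Fin n)) ∈ S ∧ degreeIn S v ≤ 2 * k + 1})
      Filter.atTop (nhds 1) := by
  classical
  set β : ℝ := ((k : ℝ) + 1) * ε with hβdef
  have hβ : 0 < β := by positivity
  set a₀ : ℕ := ⌈((k : ℝ) + 2) / β⌉₊ + 1 with ha₀def
  have ha₀ : ((k : ℝ) + 2) + β ≤ β * a₀ := by
    have hceil : ((k : ℝ) + 2) / β ≤ (⌈((k : ℝ) + 2) / β⌉₊ : ℝ) := Nat.le_ceil _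
    rw [div_le_iff₀ hβ] at hceil
    have : (a₀ : ℝ) = (⌈((k : ℝ) + 2) / β⌉₊ : ℝ) + 1 := by rw [ha₀def]; push_cast; ring
    rw [this]
    nlinarith [hceil]
  set C : ℕ := (2 ^ (k + 2 + a₀)) ^ a₀ + (k + 2 + a₀) * 2 ^ Nat.choose (k + 2 + a₀ + 1) 2
    with hCdef
  set bnd : ℕ → ℝ≥0∞ := fun n => (C : ℝ≥0∞) * (n : ℝ≥0∞) ^ (-β) with hbnddef
  have hbnd0 : Tendsto bnd atTop (nhds 0) := by
    have := ENNReal.Tendsto.const_mul (a := (C : ℝ≥0∞)) (tendsto_nat_rpow_neg hβ)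
      (Or.inr (ENNReal.natCast_ne_top C))
    simpa using this
  have htend1 : Tendsto (fun n : ℕ => 1 - bnd n) atTop (nhds 1) := by
    have := ENNReal.Tendsto.sub (tendsto_const_nhds (x := (1 : ℝ≥0∞))) hbnd0
      (Or.inl (by norm_num))
    simpa using this
  refine tendsto_of_tendsto_of_tendsto_of_le_of_le' htend1 tendsto_const_nhds ?_ ?_
  · -- lower bound eventually
    filter_upwards [Filter.eventually_ge_atTop 1] with n hn
    set good : Set (Sym2 (Fin n) → Bool) :=
      {ω : Sym2 (Fin n) → Bool |
        ∀ S : Set (Finset (Fin n)), S ⊆ cliqueComplexOf (graphOf ω) → IsComplex S →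
          IsPure S (k + 1) → StronglyConnected S (k + 1) →
          ∃ v : Fin n, ({v} : Finset (Fin n)) ∈ S ∧ degreeIn S v ≤ 2 * k + 1} with hgood
    set bad : Set (Sym2 (Fin n) → Bool) :=
      {ω : Sym2 (Fin n) → Bool | ∃ S : Set (Finset (Fin n)),
        S ⊆ cliqueComplexOf (graphOf ω) ∧ IsComplex S ∧ IsPure S (k + 1) ∧
        StronglyConnected S (k + 1) ∧
        ∀ v : Fin n, ({v} : Finset (Fin n)) ∈ S → 2 * k + 2 ≤ degreeIn S v} with hbad
    have hcover : (Set.univ : Set (Sym2 (Fin n) → Bool)) ⊆ good ∪ bad := by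
      intro ω _
      by_cases hg : ω ∈ good
      · exact Or.inl hg
      · refine Or.inr ?_
        simp only [hgood, Set.mem_setOf_eq] at hg
        push_neg at hg
        obtain ⟨S, h1, h2, h3, h4, h5⟩ := hg
        refine ⟨S, h1, h2, h3, h4, fun v hv => ?_⟩
        have := h5 v hv
        omega
    have hbadle : erdosRenyi n (p n) (hp1 n) bad ≤ bnd n := by
      have hb := measure_bad_final k a₀ ε hε (by rw [hβdef] at ha₀; linarith [ha₀]) n hn
        (p n) (hp1 n) (hp n)
      refine hb.trans ?_
      rw [hbnddef, hCdef, hβdef]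
    have hone : (1 : ℝ≥0∞) ≤ erdosRenyi n (p n) (hp1 n) good + erdosRenyi n (p n) (hp1 n) bad := by
      have h1 : (1 : ℝ≥0∞) = erdosRenyi n (p n) (hp1 n) Set.univ := (measure_univ).symm
      rw [h1]
      exact (measure_mono hcover).trans (measure_union_le _ _)
    have : (1 : ℝ≥0∞) ≤ erdosRenyi n (p n) (hp1 n) good + bnd n :=
      hone.trans (add_le_add_right hbadle _)
    exact tsub_le_iff_right.2 this
  · filter_upwards with n
    exact prob_le_one
end

section
/- Let X be a finite clique complex and let S₁, S₂ ⊆ X be two distinct maximal relevant (k+1)-subcomplexes. Then dim(S₁ ∩ S₂) ≤ k − 1. -/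
open Finset

/-! Basic definitions for finite abstract simplicial complexes, viewed as
downward-closed families of nonempty finite sets of vertices. -/

variable {V : Type*} [DecidableEq V]

private lemma exists_maximal_face {V : Type*} [DecidableEq V] {S : Set (Finset V)}
    (h : S.Finite) {σ : Finset V} (hσ : σ ∈ S) :
    ∃ τ, σ ⊆ τ ∧ IsMaximalFace S τ := by
  obtain ⟨τ, ⟨hτS, hστ⟩, hmax⟩ := Set.Finite.exists_maximalFor Finset.card
    {τ ∈ S | σ ⊆ τ} (h.subset (fun x hx => hx.1)) ⟨σ, hσ, subset_rfl⟩
  refine ⟨τ, hστ, hτS, fun η hη hτη => ?_⟩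
  have := hmax (j := η) ⟨hη, hστ.trans hτη⟩ (Finset.card_le_card hτη)
  exact (Finset.eq_of_subset_of_card_le hτη this.ge).symm

private lemma facetAdj_mono {V : Type*} [DecidableEq V] {S T : Set (Finset V)} {d : ℕ}
    (hST : S ⊆ T) {a b : Finset V} (h : FacetAdj S d a b) : FacetAdj T d a b :=
  ⟨hST h.1, hST h.2.1, h.2.2⟩

private lemma facetAdj_symm {V : Type*} [DecidableEq V] {S : Set (Finset V)} {d : ℕ} :
    Symmetric (FacetAdj S d) := by
  rintro a b ⟨h1, h2, h3, h4, h5⟩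
  exact ⟨h2, h1, h4, h3, by rwa [Finset.inter_comm]⟩

/-- Distinct maximal relevant `(k+1)`-subcomplexes of a finite clique
complex intersect in dimension at most `k - 1`: every common face has at most `k` vertices. -/
theorem dim_inter_maxRelevant_le {V : Type*} [DecidableEq V]
    (k : ℕ) (X S₁ S₂ : Set (Finset V)) (hX : IsCliqueComplex X) (hfin : X.Finite)
    (h1 : IsMaxRelevant X S₁ (k + 1)) (h2 : IsMaxRelevant X S₂ (k + 1)) (hne : S₁ ≠ S₂) :
    ∀ σ ∈ S₁ ∩ S₂, σ.card ≤ k:= by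
  intro σ hσ
  by_contra hcard
  push_neg at hcard
  have hcard : k + 1 ≤ σ.card := hcard
  apply hne
  obtain ⟨⟨hS1X, hC1, hP1, hSC1⟩, hM1⟩ := h1
  obtain ⟨⟨hS2X, hC2, hP2, hSC2⟩, hM2⟩ := h2
  have hfin1 : S₁.Finite := hfin.subset hS1X
  have hfin2 : S₂.Finite := hfin.subset hS2X
  obtain ⟨τ₁, hστ₁, hτ₁⟩ := exists_maximal_face hfin1 hσ.1
  obtain ⟨τ₂, hστ₂, hτ₂⟩ := exists_maximal_face hfin2 hσ.2
  have hc1 : τ₁.card = k + 2 := hP1.2 τ₁ hτ₁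
  have hc2 : τ₂.card = k + 2 := hP2.2 τ₂ hτ₂
  set T := S₁ ∪ S₂ with hT
  have hlink : Relation.ReflTransGen (FacetAdj T (k + 1)) τ₁ τ₂ := by
    have hsub : σ ⊆ τ₁ ∩ τ₂ := Finset.subset_inter hστ₁ hστ₂
    have hint : k + 1 ≤ (τ₁ ∩ τ₂).card := le_trans hcard (Finset.card_le_card hsub)
    have hle : (τ₁ ∩ τ₂).card ≤ k + 2 := hc1 ▸ Finset.card_le_card Finset.inter_subset_left
    by_cases hq : (τ₁ ∩ τ₂).card = k + 2
    · have h1 : τ₁ ∩ τ₂ = τ₁ :=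
        Finset.eq_of_subset_of_card_le Finset.inter_subset_left (by omega)
      have h2 : τ₁ ⊆ τ₂ := h1 ▸ Finset.inter_subset_right
      have : τ₁ = τ₂ := Finset.eq_of_subset_of_card_le h2 (by omega)
      exact this ▸ Relation.ReflTransGen.refl
    · exact Relation.ReflTransGen.single
        ⟨Or.inl hτ₁.1, Or.inr hτ₂.1, hc1, hc2, by omega⟩
  have hTrel : IsRelevant X T (k + 1) := by
    refine ⟨Set.union_subset hS1X hS2X, ⟨?_, ?_⟩, ⟨⟨τ₁, Or.inl hτ₁.1⟩, ?_⟩, ?_⟩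
    · rintro ρ (h | h)
      exacts [hC1.1 ρ h, hC2.1 ρ h]
    · rintro ρ (h | h) η hη hne'
      exacts [Or.inl (hC1.2 ρ h η hη hne'), Or.inr (hC2.2 ρ h η hη hne')]
    · rintro ρ ⟨(hρ | hρ), hmax⟩
      · exact hP1.2 ρ ⟨hρ, fun η hη hsub => hmax η (Or.inl hη) hsub⟩
      · exact hP2.2 ρ ⟨hρ, fun η hη hsub => hmax η (Or.inr hη) hsub⟩
    · have mono1 : ∀ {a b : Finset V}, Relation.ReflTransGen (FacetAdj S₁ (k + 1)) a b →
          Relation.ReflTransGen (FacetAdj T (k + 1)) a b := fun h =>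
        Relation.ReflTransGen.mono (fun _ _ => facetAdj_mono Set.subset_union_left) _ _ h
      have mono2 : ∀ {a b : Finset V}, Relation.ReflTransGen (FacetAdj S₂ (k + 1)) a b →
          Relation.ReflTransGen (FacetAdj T (k + 1)) a b := fun h =>
        Relation.ReflTransGen.mono (fun _ _ => facetAdj_mono Set.subset_union_right) _ _ h
      have hsymmT : Symmetric (Relation.ReflTransGen (FacetAdj T (k + 1))) :=
        by
          haveI : Std.Symm (FacetAdj T (k + 1)) := ⟨fun _ _ h => facetAdj_symm h⟩
          exact fun _ _ h => Std.Symm.symm _ _ h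
      intro a ha b hb hca hcb
      rcases ha with ha | ha <;> rcases hb with hb | hb
      · exact mono1 (hSC1 a ha b hb hca hcb)
      · exact (mono1 (hSC1 a ha τ₁ hτ₁.1 hca hc1)).trans
          (hlink.trans (mono2 (hSC2 τ₂ hτ₂.1 b hb hc2 hcb)))
      · exact (mono2 (hSC2 a ha τ₂ hτ₂.1 hca hc2)).trans
          ((hsymmT hlink).trans (mono1 (hSC1 τ₁ hτ₁.1 b hb hc1 hcb)))
      · exact mono2 (hSC2 a ha b hb hca hcb)
  have e1 := hM1 T hTrel Set.subset_union_left
  have e2 := hM2 T hTrel Set.subset_union_right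
  rw [← e1, ← e2]
end

section
/- Fix k ≥ 0, and let X be a finite clique complex such that every maximal relevant (k+1)-subcomplex of X consists of a single (k+1)-dimensional face together with its subfaces (equivalently, is supported on exactly k+2 vertices). Then X is (k+1)-collapsible. -/
open Finset

/-! Basic definitions for finite abstract simplicial complexes, viewed as
downward-closed families of nonempty finite sets of vertices. -/

variable {V : Type*} [DecidableEq V]

/-- Every relevant subcomplex of a finite complex extends to a maximal one. -/
lemma extend_relevant {X S : Set (Finset V)} (hfin : X.Finite) {d : ℕ}
    (hS : IsRelevant X S d) : ∃ T, IsMaxRelevant X T d ∧ S ⊆ T := by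
  have hF : {T : Set (Finset V) | IsRelevant X T d ∧ S ⊆ T}.Finite :=
    hfin.finite_subsets.subset (fun T hT => hT.1.1)
  obtain ⟨T, hTmem, hTmax⟩ := Set.Finite.exists_maximalFor id _ hF ⟨S, hS, subset_rfl⟩
  exact ⟨T, ⟨hTmem.1, fun T' hT' hsub =>
    subset_antisymm (hTmax ⟨hT', hTmem.2.trans hsub⟩ hsub) hsub⟩, hTmem.2⟩

lemma card_le_of_maxRelevant (k : ℕ) (X : Set (Finset V)) (hX : IsCliqueComplex X)
    (hfin : X.Finite)
    (h : ∀ S : Set (Finset V), IsMaxRelevant X S (k + 1) →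
      ∃ σ : Finset V, σ.card = k + 2 ∧ S = {τ : Finset V | τ.Nonempty ∧ τ ⊆ σ}) :
    ∀ τ ∈ X, τ.card ≤ k + 2 := by
  intro τ hτ
  by_contra hc
  obtain ⟨τ', hτ'sub, hτ'c⟩ : ∃ τ' ⊆ τ, τ'.card = k + 3 :=
    Finset.exists_subset_card_eq (by omega)
  have hτ'X : τ' ∈ X := hX.1.2 τ hτ τ' hτ'sub (Finset.card_pos.mp (by omega))
  set S : Set (Finset V) := {η | η.Nonempty ∧ η ⊆ τ' ∧ η.card ≤ k + 2} with hSdef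
  have hSsubX : S ⊆ X := fun η hη =>
    hX.1.2 τ' hτ'X η hη.2.1 hη.1
  have hScard : ∀ η ∈ S, η.card ≤ k + 2 := fun η hη => hη.2.2
  -- facets of S have card k+2
  have hmaxcard : ∀ η, IsMaximalFace S η → η.card = k + 2 := by
    intro η ⟨hηS, hηmax⟩
    by_contra hne
    have hlt : η.card < k + 2 := lt_of_le_of_ne hηS.2.2 hne
    have hss : η ⊂ τ' := hηS.2.1.ssubset_of_ne (by
      intro he; rw [he] at hlt; omega)
    obtain ⟨v, hvτ', hvη⟩ := Finset.exists_of_ssubset hss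
    have : insert v η ∈ S := ⟨Finset.insert_nonempty _ _,
      Finset.insert_subset hvτ' hηS.2.1, by
        rw [Finset.card_insert_of_notMem hvη]; omega⟩
    have := hηmax _ this (Finset.subset_insert _ _)
    exact hvη (this ▸ Finset.mem_insert_self v η)
  have hrel : IsRelevant X S (k + 1) := by
    refine ⟨hSsubX, ⟨fun η hη => hη.1, fun η hη ρ hρ hne =>
      ⟨hne, hρ.trans hη.2.1, le_trans (Finset.card_le_card hρ) hη.2.2⟩⟩, ?_, ?_⟩
    · refine ⟨?_, hmaxcard⟩
      obtain ⟨η, hηsub, hηc⟩ : ∃ η ⊆ τ', η.card = k + 2 :=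
        Finset.exists_subset_card_eq (by omega)
      exact ⟨η, Finset.card_pos.mp (by omega), hηsub, le_of_eq hηc⟩
    · intro α hα β hβ hαc hβc
      rcases eq_or_ne α β with rfl | hne
      · exact Relation.ReflTransGen.refl
      · refine Relation.ReflTransGen.single ⟨hα, hβ, hαc, hβc, ?_⟩
        have h1 : (α ∪ β).card ≤ k + 3 := by
          rw [← hτ'c]; exact Finset.card_le_card (Finset.union_subset hα.2.1 hβ.2.1)
        have h2 := Finset.card_union_add_card_inter α β
        have h3 : (α ∩ β).card ≠ k + 2 := by
          intro he
          have : α ∩ β = α := Finset.eq_of_subset_of_card_le Finset.inter_subset_left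
            (by omega)
          exact hne (Finset.eq_of_subset_of_card_le (this ▸ Finset.inter_subset_right)
            (by omega))
        have h4 : (α ∩ β).card ≤ k + 2 :=
          le_trans (Finset.card_le_card Finset.inter_subset_left) (le_of_eq hαc)
        omega
  obtain ⟨T, hTmax, hST⟩ := extend_relevant hfin hrel
  obtain ⟨σ₀, hσ₀c, hTeq⟩ := h T hTmax
  have hτ'σ₀ : τ' ⊆ σ₀ := by
    intro v hv
    have : ({v} : Finset V) ∈ S := ⟨Finset.singleton_nonempty v,
      Finset.singleton_subset_iff.mpr hv, by simp⟩
    have := hST this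
    rw [hTeq] at this
    exact Finset.singleton_subset_iff.mp this.2
  have := Finset.card_le_card hτ'σ₀
  omega

lemma inter_card_le_of_maxRelevant (k : ℕ) (X : Set (Finset V)) (hX : IsCliqueComplex X)
    (hfin : X.Finite)
    (h : ∀ S : Set (Finset V), IsMaxRelevant X S (k + 1) →
      ∃ σ : Finset V, σ.card = k + 2 ∧ S = {τ : Finset V | τ.Nonempty ∧ τ ⊆ σ}) :
    ∀ τ₁ ∈ X, ∀ τ₂ ∈ X, τ₁.card = k + 2 → τ₂.card = k + 2 → τ₁ ≠ τ₂ →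
      (τ₁ ∩ τ₂).card ≤ k := by
  intro τ₁ hτ₁ τ₂ hτ₂ hc₁ hc₂ hne
  by_contra hc
  push_neg at hc
  have hinterne : (τ₁ ∩ τ₂).card ≠ k + 2 := by
    intro he
    have h1 : τ₁ ∩ τ₂ = τ₁ := Finset.eq_of_subset_of_card_le Finset.inter_subset_left
      (by omega)
    exact hne (Finset.eq_of_subset_of_card_le (h1 ▸ Finset.inter_subset_right) (by omega))
  have hinterle : (τ₁ ∩ τ₂).card ≤ k + 2 :=
    le_trans (Finset.card_le_card Finset.inter_subset_left) (le_of_eq hc₁)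
  have hinter : (τ₁ ∩ τ₂).card = k + 1 := by omega
  set S : Set (Finset V) := {η | η.Nonempty ∧ (η ⊆ τ₁ ∨ η ⊆ τ₂)} with hSdef
  have hSsubX : S ⊆ X := by
    rintro η ⟨hne', h1 | h2⟩
    · exact hX.1.2 τ₁ hτ₁ η h1 hne'
    · exact hX.1.2 τ₂ hτ₂ η h2 hne'
  have hfull : ∀ η ∈ S, η.card = k + 2 → η = τ₁ ∨ η = τ₂ := by
    rintro η ⟨hne', h1 | h2⟩ hc'
    · exact Or.inl (Finset.eq_of_subset_of_card_le h1 (by omega))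
    · exact Or.inr (Finset.eq_of_subset_of_card_le h2 (by omega))
  have hτ₁S : τ₁ ∈ S := ⟨Finset.card_pos.mp (by omega), Or.inl subset_rfl⟩
  have hτ₂S : τ₂ ∈ S := ⟨Finset.card_pos.mp (by omega), Or.inr subset_rfl⟩
  have hrel : IsRelevant X S (k + 1) := by
    refine ⟨hSsubX, ⟨fun η hη => hη.1, ?_⟩, ⟨⟨τ₁, hτ₁S⟩, ?_⟩, ?_⟩
    · rintro η ⟨hne', h1 | h2⟩ ρ hρ hρne
      · exact ⟨hρne, Or.inl (hρ.trans h1)⟩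
      · exact ⟨hρne, Or.inr (hρ.trans h2)⟩
    · rintro η ⟨hηS, hηmax⟩
      rcases hηS.2 with h1 | h2
      · rw [← hηmax τ₁ hτ₁S h1]; exact hc₁
      · rw [← hηmax τ₂ hτ₂S h2]; exact hc₂
    · intro α hα β hβ hαc hβc
      rcases eq_or_ne α β with rfl | hne'
      · exact Relation.ReflTransGen.refl
      · rcases hfull α hα hαc with rfl | rfl <;> rcases hfull β hβ hβc with rfl | rfl
        · exact absurd rfl hne'
        · exact Relation.ReflTransGen.single ⟨hα, hβ, hαc, hβc, hinter⟩
        · exact Relation.ReflTransGen.single ⟨hα, hβ, hαc, hβc,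
            by rw [Finset.inter_comm]; exact hinter⟩
        · exact absurd rfl hne'
  obtain ⟨T, hTmax, hST⟩ := extend_relevant hfin hrel
  obtain ⟨σ₀, hσ₀c, hTeq⟩ := h T hTmax
  have hsub : τ₁ ∪ τ₂ ⊆ σ₀ := by
    intro v hv
    have hvS : ({v} : Finset V) ∈ S := by
      rcases Finset.mem_union.mp hv with h1 | h2
      · exact ⟨Finset.singleton_nonempty v, Or.inl (Finset.singleton_subset_iff.mpr h1)⟩
      · exact ⟨Finset.singleton_nonempty v, Or.inr (Finset.singleton_subset_iff.mpr h2)⟩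
    have := hST hvS
    rw [hTeq] at this
    exact Finset.singleton_subset_iff.mp this.2
  have h2 := Finset.card_union_add_card_inter τ₁ τ₂
  have := Finset.card_le_card hsub
  omega

lemma collapse_aux (k : ℕ) (X : Set (Finset V))
    (hA : ∀ τ ∈ X, τ.card ≤ k + 2)
    (hB : ∀ τ₁ ∈ X, ∀ τ₂ ∈ X, τ₁.card = k + 2 → τ₂.card = k + 2 → τ₁ ≠ τ₂ →
      (τ₁ ∩ τ₂).card ≤ k) :
    ∀ n : ℕ, ∀ K : Set (Finset V), K.Finite → K.ncard ≤ n → K ⊆ X →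
      (∀ τ ∈ K, τ.card = k + 2 → ∀ σ ⊆ τ, σ.card = k + 1 → σ ∈ K) →
      Collapsible (k + 1) K := by
  intro n
  induction n with
  | zero =>
    intro K hKfin hKcard _ _
    have hKe : K = ∅ := by
      rw [← Set.ncard_eq_zero hKfin]; omega
    exact ⟨K, Relation.ReflTransGen.refl, fun σ hσ => by rw [hKe] at hσ; exact hσ.elim⟩
  | succ n ih =>
    intro K hKfin hKcard hKX hinv
    by_cases hex : ∃ τ ∈ K, τ.card = k + 2
    · obtain ⟨τ, hτK, hτc⟩ := hex
      obtain ⟨σ, hστ, hσc⟩ : ∃ σ ⊆ τ, σ.card = k + 1 :=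
        Finset.exists_subset_card_eq (by omega)
      have hσK : σ ∈ K := hinv τ hτK hτc σ hστ hσc
      have hτmax : IsMaximalFace K τ := by
        refine ⟨hτK, fun η hη hsub => ?_⟩
        exact (Finset.eq_of_subset_of_card_le hsub (by
          have := hA η (hKX hη); omega)).symm
      have hfree : IsFreeFace K σ τ := by
        refine ⟨hσK, hτmax, hστ.ssubset_of_ne (by
          intro he; rw [he] at hσc; omega), ?_⟩
        intro η hηmax hση
        have hηX : η ∈ X := hKX hηmax.1
        by_cases hηc : η.card = k + 2
        · by_contra hne
          have hint := hB η hηX τ (hKX hτK) hηc hτc hne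
          have : σ ⊆ η ∩ τ := Finset.subset_inter hση hστ
          have := Finset.card_le_card this
          omega
        · have hηle : η.card ≤ k + 1 := by have := hA η hηX; omega
          have hησ : η = σ := (Finset.eq_of_subset_of_card_le hση (by omega)).symm
          rw [hησ] at hηmax
          have hτσ := hηmax.2 τ hτK hστ
          rw [hτσ] at hτc; omega
      set K' : Set (Finset V) := K \ {η | σ ⊆ η ∧ η ⊆ τ} with hK'def
      have hK'sub : K' ⊆ K := Set.diff_subset
      have hK'ssub : K' ⊂ K := by
        refine ⟨hK'sub, fun hKK' => ?_⟩
        have : τ ∈ K' := hKK' hτK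
        exact this.2 ⟨hστ, subset_rfl⟩
      have hK'fin : K'.Finite := hKfin.subset hK'sub
      have hK'card : K'.ncard ≤ n := by
        have := Set.ncard_lt_ncard hK'ssub hKfin
        omega
      have hK'inv : ∀ τ' ∈ K', τ'.card = k + 2 → ∀ σ' ⊆ τ', σ'.card = k + 1 → σ' ∈ K' := by
        intro τ' hτ' hτ'c σ' hσ'sub hσ'c
        have hσ'K : σ' ∈ K := hinv τ' hτ'.1 hτ'c σ' hσ'sub hσ'c
        refine ⟨hσ'K, ?_⟩
        rintro ⟨hσσ', hσ'τ⟩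
        have hσ'σ : σ' = σ := (Finset.eq_of_subset_of_card_le hσσ' (by omega)).symm
        have hττ' : τ ≠ τ' := by
          rintro rfl
          exact hτ'.2 ⟨hστ, subset_rfl⟩
        have hint := hB τ (hKX hτK) τ' (hKX hτ'.1) hτc hτ'c hττ'
        have : σ' ⊆ τ ∩ τ' := Finset.subset_inter hσ'τ hσ'sub
        have := Finset.card_le_card this
        omega
      obtain ⟨K'', hcoll, hsmall⟩ := ih K' hK'fin hK'card (hK'sub.trans hKX) hK'inv
      exact ⟨K'', Relation.ReflTransGen.head ⟨σ, τ, hfree, rfl⟩ hcoll, hsmall⟩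
    · refine ⟨K, Relation.ReflTransGen.refl, fun ρ hρ => ?_⟩
      have h1 := hA ρ (hKX hρ)
      have h2 : ρ.card ≠ k + 2 := fun hc => hex ⟨ρ, hρ, hc⟩
      omega

/-- If every maximal relevant `(k+1)`-subcomplex of a finite clique
complex `X` consists of a single `(k+1)`-dimensional face together with all of its
subfaces (so is supported on exactly `k + 2` vertices), then `X` is `(k+1)`-collapsible. -/
theorem collapsible_of_maxRelevant_single_face {V : Type*} [DecidableEq V]
    (k : ℕ) (X : Set (Finset V)) (hX : IsCliqueComplex X) (hfin : X.Finite)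
    (h : ∀ S : Set (Finset V), IsMaxRelevant X S (k + 1) →
      ∃ σ : Finset V, σ.card = k + 2 ∧ S = {τ : Finset V | τ.Nonempty ∧ τ ⊆ σ}) :
    Collapsible (k + 1) X := by
  refine collapse_aux k X (card_le_of_maxRelevant k X hX hfin h)
    (inter_card_le_of_maxRelevant k X hX hfin h) X.ncard X hfin le_rfl subset_rfl ?_
  intro τ hτ _ σ hσsub hσc
  exact hX.1.2 τ hτ σ hσsub (Finset.card_pos.mp (by omega))
end

section
/- Fix k ≥ 1. Every finite clique complex on at most 2k+1 vertices is k-collapsible. In particular: (i) if the 1-skeleton of such a clique complex L is a proper subgraph of the complete graph K_{2k+1}, then every strongly connected, pure k-dimensional subcomplex of L contains a vertex of degree at most 2k−1; and (ii) if the 1-skeleton of L is the complete graph K_{2k+1}, then L is the 2k-dimensional simplex and collapses, via collapses of intervals [σ, σ ∪ {x}] over a fixed cone vertex x, to a complex of dimension at most k−1. -/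
open Finset

/-! Basic definitions for finite abstract simplicial complexes, viewed as
downward-closed families of nonempty finite sets of vertices. -/

variable {V : Type*} [DecidableEq V]

section Aux
set_option linter.unusedSectionVars false

variable {V : Type*} [DecidableEq V]

/-- `σ` is a clique for the adjacency relation `G`. -/
def IsClq (G : V → V → Prop) (σ : Finset V) : Prop :=
  ∀ u ∈ σ, ∀ w ∈ σ, u ≠ w → G u w

/-- All cliques (including `∅`) with vertices in `W`. -/
def cliquesIn (G : V → V → Prop) (W : Finset V) : Set (Finset V) :=
  {σ | σ ⊆ W ∧ IsClq G σ}

/-- Data of a (pseudo-)elementary collapse at the pair `(ρ, insert w ρ)`. -/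
def GoodPair (m : ℕ) (K : Set (Finset V)) (ρ : Finset V) (w : V) : Prop :=
  w ∉ ρ ∧ m ≤ ρ.card ∧ ρ ∈ K ∧ insert w ρ ∈ K ∧
    ∀ η, IsMaximalFace K η → ρ ⊆ η → η = insert w ρ

def AStep (m : ℕ) (K K' : Set (Finset V)) : Prop :=
  ∃ ρ w, GoodPair m K ρ w ∧ K' = K \ {η | ρ ⊆ η ∧ η ⊆ insert w ρ}

def ConeStep (m : ℕ) (x : V) (K K' : Set (Finset V)) : Prop :=
  ∃ ρ, GoodPair m K ρ x ∧ K' = K \ {η | ρ ⊆ η ∧ η ⊆ insert x ρ}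

lemma isClq_subset {G : V → V → Prop} {σ τ : Finset V} (h : τ ⊆ σ) (hσ : IsClq G σ) :
    IsClq G τ := fun u hu w hw huw => hσ u (h hu) w (h hw) huw

lemma exists_max_above [Fintype V] (K : Set (Finset V)) {σ : Finset V} (h : σ ∈ K) :
    ∃ τ, IsMaximalFace K τ ∧ σ ⊆ τ := by
  obtain ⟨τ, ⟨hτK, hστ⟩, hmax⟩ :=
    Set.Finite.exists_maximalFor id {η ∈ K | σ ⊆ η} (Set.toFinite _) ⟨σ, h, subset_rfl⟩
  refine ⟨τ, ⟨hτK, fun η hη hτη => ?_⟩, hστ⟩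
  have := hmax ⟨hη, hστ.trans hτη⟩ (Finset.le_iff_subset.2 hτη)
  exact subset_antisymm this hτη

lemma goodPair_free [Fintype V] {m : ℕ} {K : Set (Finset V)} {ρ : Finset V} {w : V}
    (hm : ρ.Nonempty) (hg : GoodPair m K ρ w) :
    IsFreeFace (K \ {∅}) ρ (insert w ρ) := by
  obtain ⟨hw, hc, hρ, hins, hmax⟩ := hg
  have hρ' : ρ ∈ K \ {∅} := ⟨hρ, by simp [hm.ne_empty]⟩
  refine ⟨hρ', ⟨⟨hins, by simp [Finset.insert_nonempty w ρ |>.ne_empty]⟩, ?_⟩,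
    Finset.ssubset_insert hw, ?_⟩
  · intro η hη hsub
    obtain ⟨τ, hτmax, hητ⟩ := exists_max_above K hη.1
    have := hmax τ hτmax (((Finset.subset_insert w ρ).trans hsub).trans hητ)
    exact subset_antisymm (this ▸ hητ) hsub
  · intro η hη hsub
    have hηK : IsMaximalFace K η := by
      refine ⟨hη.1.1, fun ζ hζ hηζ => ?_⟩
      have hηne : η ≠ ∅ := hη.1.2
      have : ζ ∈ K \ {∅} := ⟨hζ, by
        simp only [Set.mem_singleton_iff]
        intro hz; subst hz
        exact hηne (Finset.subset_empty.1 hηζ)⟩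
      exact hη.2 ζ this hηζ
    exact hmax η hηK hsub

lemma astep_subset {m : ℕ} {K K' : Set (Finset V)} (h : AStep m K K') : K' ⊆ K := by
  obtain ⟨ρ, w, _, rfl⟩ := h; exact Set.diff_subset

lemma rtg_astep_subset {m : ℕ} {K K' : Set (Finset V)}
    (h : Relation.ReflTransGen (AStep m) K K') : K' ⊆ K := by
  induction h with
  | refl => exact subset_rfl
  | tail _ hstep ih => exact (astep_subset hstep).trans ih

lemma astep_collapseStep [Fintype V] {m : ℕ} (hm : 1 ≤ m) {K K' : Set (Finset V)}
    (h : AStep m K K') : CollapseStep (K \ {∅}) (K' \ {∅}) := by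
  obtain ⟨ρ, w, hg, rfl⟩ := h
  have hne : ρ.Nonempty := Finset.card_pos.1 (lt_of_lt_of_le hm hg.2.1)
  exact ⟨ρ, insert w ρ, goodPair_free hne hg, (Set.diff_diff_comm).symm⟩

lemma conestep_rel [Fintype V] {m : ℕ} {x : V} (hm : 1 ≤ m) {K K' : Set (Finset V)}
    (h : ConeStep m x K K') :
    ∃ σ : Finset V, IsFreeFace (K \ {∅}) σ (insert x σ) ∧
      (K' \ {∅}) = (K \ {∅}) \ {η | σ ⊆ η ∧ η ⊆ insert x σ} := by
  obtain ⟨ρ, hg, rfl⟩ := h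
  have hne : ρ.Nonempty := Finset.card_pos.1 (lt_of_lt_of_le hm hg.2.1)
  exact ⟨ρ, goodPair_free hne hg, Set.diff_diff_comm⟩

end Aux
section Cone
set_option linter.unusedSectionVars false

variable {V : Type*} [DecidableEq V] [Fintype V]
variable {G : V → V → Prop} {W : Finset V} {m : ℕ} {x : V}

/-- Cliques avoiding `x` of size at least `m`: the faces to be matched with their cone. -/
def coneT (G : V → V → Prop) (W : Finset V) (m : ℕ) (x : V) : Set (Finset V) :=
  {σ | σ ⊆ W.erase x ∧ IsClq G σ ∧ m ≤ σ.card}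

/-- State after collapsing the pairs `(σ, insert x σ)` for `σ ∈ R`. -/
def coneK (G : V → V → Prop) (W : Finset V) (x : V) (R : Set (Finset V)) : Set (Finset V) :=
  {η | η ∈ cliquesIn G W ∧ η.erase x ∉ R}

lemma cone_final {R : Set (Finset V)} (hTR : coneT G W m x ⊆ R) {σ : Finset V}
    (hσ : σ ∈ coneK G W x R) : σ.card ≤ m := by
  obtain ⟨⟨hσW, hσclq⟩, hσR⟩ := hσ
  have he : σ.erase x ∉ coneT G W m x := fun h => hσR (hTR h)
  have h1 : σ.erase x ⊆ W.erase x := Finset.erase_subset_erase x hσW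
  have h2 : IsClq G (σ.erase x) := isClq_subset (Finset.erase_subset x σ) hσclq
  have h3 : (σ.erase x).card < m := by
    by_contra h; exact he ⟨h1, h2, le_of_not_gt h⟩
  by_cases hx : x ∈ σ
  · have := Finset.card_erase_add_one hx; omega
  · rw [Finset.erase_eq_of_notMem hx] at h3; omega

lemma cone_aux (hsym : ∀ a b, G a b → G b a) (hx : x ∈ W)
    (hdom : ∀ y ∈ W, y ≠ x → G x y) :
    ∀ (n : ℕ) (R : Set (Finset V)), R ⊆ coneT G W m x → (coneT G W m x \ R).ncard ≤ n →
    ∃ F, Relation.ReflTransGen (ConeStep m x) (coneK G W x R) F ∧ ∀ σ ∈ F, σ.card ≤ m := by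
  intro n
  induction n with
  | zero =>
    intro R hR hcard
    have hTR : coneT G W m x ⊆ R := by
      have : (coneT G W m x \ R) = ∅ := by
        rw [← Set.ncard_eq_zero (Set.toFinite _)]; omega
      intro σ hσ
      by_contra hσR
      exact absurd (Set.eq_empty_iff_forall_notMem.1 this σ) (fun h => h ⟨hσ, hσR⟩)
    exact ⟨coneK G W x R, Relation.ReflTransGen.refl, fun σ hσ => cone_final hTR hσ⟩
  | succ n ih =>
    intro R hR hcard
    rcases Set.eq_empty_or_nonempty (coneT G W m x \ R) with hemp | hne
    · have hTR : coneT G W m x ⊆ R := fun σ hσ => by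
        by_contra hσR; exact absurd (Set.eq_empty_iff_forall_notMem.1 hemp σ) (fun h => h ⟨hσ, hσR⟩)
      exact ⟨coneK G W x R, Relation.ReflTransGen.refl, fun σ hσ => cone_final hTR hσ⟩
    · obtain ⟨σ, hσ, hmaxσ⟩ := Set.Finite.exists_maximalFor id _ (Set.toFinite _) hne
      obtain ⟨⟨hσW, hσclq, hσcard⟩, hσR⟩ := hσ
      have hxσ : x ∉ σ := fun h => Finset.notMem_erase x W (hσW h)
      have hσWsub : σ ⊆ W := hσW.trans (Finset.erase_subset x W)
      have hinsclq : ∀ η : Finset V, η ⊆ W → IsClq G η → IsClq G (insert x η) := by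
        intro η hηW hηclq u hu w hw huw
        rcases Finset.mem_insert.1 hu with rfl | hu'
        · rcases Finset.mem_insert.1 hw with rfl | hw'
          · exact absurd rfl huw
          · exact hdom w (hηW hw') (Ne.symm huw)
        · rcases Finset.mem_insert.1 hw with rfl | hw'
          · exact hsym _ _ (hdom u (hηW hu') huw)
          · exact hηclq u hu' w hw' huw
      -- the collapse step at (σ, insert x σ)
      have hstep : ConeStep m x (coneK G W x R) (coneK G W x (R ∪ {σ})) := by
        refine ⟨σ, ⟨hxσ, hσcard, ⟨⟨hσWsub, hσclq⟩, by rwa [Finset.erase_eq_of_notMem hxσ]⟩,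
          ⟨⟨Finset.insert_subset hx hσWsub, hinsclq σ hσWsub hσclq⟩, by
            rwa [Finset.erase_insert hxσ]⟩, ?_⟩, ?_⟩
        · -- maximal faces over σ
          intro η hη hσsubη
          obtain ⟨⟨⟨hηW, hηclq⟩, hηR⟩, hηmax⟩ := hη
          by_cases hxη : x ∈ η
          · have hσe : σ ⊆ η.erase x := (Finset.subset_erase).2 ⟨hσsubη, hxσ⟩
            have he : η.erase x ∈ coneT G W m x :=
              ⟨Finset.erase_subset_erase x hηW,
               isClq_subset (Finset.erase_subset x η) hηclq,
               hσcard.trans (Finset.card_le_card hσe)⟩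
            have hσeq : σ = η.erase x :=
              le_antisymm hσe (hmaxσ ⟨he, hηR⟩ (Finset.le_iff_subset.2 hσe))
            rw [hσeq]
            exact (Finset.insert_erase hxη).symm
          · -- η does not contain x : contradiction with maximality
            have hζ : insert x η ∈ coneK G W x R := by
              refine ⟨⟨Finset.insert_subset hx hηW, hinsclq η hηW hηclq⟩, ?_⟩
              rw [Finset.erase_insert hxη]
              rwa [Finset.erase_eq_of_notMem hxη] at hηR
            have := hηmax _ hζ (Finset.subset_insert x η)
            exact absurd (this ▸ Finset.mem_insert_self x η) hxη
        · -- state equality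
          ext η
          simp only [coneK, cliquesIn, Set.mem_diff, Set.mem_setOf_eq, Set.mem_union,
            Set.mem_singleton_iff]
          have key : (σ ⊆ η ∧ η ⊆ insert x σ) ↔ η.erase x = σ := by
            constructor
            · rintro ⟨h1, h2⟩
              exact subset_antisymm (Finset.subset_insert_iff.1 h2)
                ((Finset.subset_erase).2 ⟨h1, hxσ⟩)
            · intro h
              exact ⟨h ▸ Finset.erase_subset x η,
                Finset.subset_insert_iff.2 (h ▸ Finset.Subset.refl _)⟩
          rw [key]
          tauto
      have hσT : σ ∈ coneT G W m x := ⟨hσW, hσclq, hσcard⟩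
      have hR' : R ∪ {σ} ⊆ coneT G W m x :=
        Set.union_subset hR (by simpa using hσT)
      have hcard' : (coneT G W m x \ (R ∪ {σ})).ncard ≤ n := by
        have hdiff : coneT G W m x \ (R ∪ {σ}) = (coneT G W m x \ R) \ {σ} :=
          Set.diff_diff.symm
        rw [hdiff, Set.ncard_diff_singleton_of_mem (show σ ∈ coneT G W m x \ R from ⟨hσT, hσR⟩)]
        have hpos : 0 < (coneT G W m x \ R).ncard :=
          (Set.ncard_pos (Set.toFinite _)).2 hne
        omega
      obtain ⟨F, hF, hFc⟩ := ih (R ∪ {σ}) hR' hcard'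
      exact ⟨F, Relation.ReflTransGen.head hstep hF, hFc⟩

lemma cone_collapse (hsym : ∀ a b, G a b → G b a) (hx : x ∈ W)
    (hdom : ∀ y ∈ W, y ≠ x → G x y) :
    ∃ F, Relation.ReflTransGen (ConeStep m x) (cliquesIn G W) F ∧ ∀ σ ∈ F, σ.card ≤ m := by
  have h0 : coneK G W x ∅ = cliquesIn G W := by
    ext η; simp [coneK]
  obtain ⟨F, hF, hFc⟩ :=
    cone_aux hsym hx hdom (coneT G W m x \ ∅).ncard ∅ (Set.empty_subset _) le_rfl
  exact ⟨F, h0 ▸ hF, hFc⟩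

end Cone
section Lift
set_option linter.unusedSectionVars false

variable {V : Type*} [DecidableEq V] [Fintype V]
variable {G : V → V → Prop} {W N : Finset V} {v : V}

/-- The ambient state corresponding to a state `Y` of the link collapse. -/
def liftK (G : V → V → Prop) (W N : Finset V) (v : V) (Y : Set (Finset V)) :
    Set (Finset V) :=
  cliquesIn G W \ {η | v ∈ η ∧ η.erase v ∈ cliquesIn G N \ Y}

lemma erase_mem_linkcliques (hsym : ∀ a b, G a b → G b a)
    (hN : ∀ w, w ∈ N ↔ w ∈ W ∧ w ≠ v ∧ G v w)
    {η : Finset V} (hη : η ∈ cliquesIn G W) (hv : v ∈ η) :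
    η.erase v ∈ cliquesIn G N := by
  obtain ⟨hηW, hηclq⟩ := hη
  refine ⟨fun u hu => ?_, isClq_subset (Finset.erase_subset v η) hηclq⟩
  obtain ⟨huv, huη⟩ := Finset.mem_erase.1 hu
  exact (hN u).2 ⟨hηW huη, huv, hηclq v hv u huη (Ne.symm huv)⟩

lemma insert_v_clique (hsym : ∀ a b, G a b → G b a) (hvW : v ∈ W)
    (hN : ∀ w, w ∈ N ↔ w ∈ W ∧ w ≠ v ∧ G v w)
    {e : Finset V} (he : e ∈ cliquesIn G N) : insert v e ∈ cliquesIn G W := by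
  obtain ⟨heN, heclq⟩ := he
  refine ⟨Finset.insert_subset hvW (fun u hu => ((hN u).1 (heN hu)).1), ?_⟩
  intro u hu w hw huw
  rcases Finset.mem_insert.1 hu with rfl | hu'
  · rcases Finset.mem_insert.1 hw with rfl | hw'
    · exact absurd rfl huw
    · exact ((hN w).1 (heN hw')).2.2
  · rcases Finset.mem_insert.1 hw with rfl | hw'
    · exact hsym _ _ ((hN u).1 (heN hu')).2.2
    · exact heclq u hu' w hw' huw

lemma lift_step (hsym : ∀ a b, G a b → G b a) (hvW : v ∈ W) (hvN : v ∉ N)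
    (hN : ∀ w, w ∈ N ↔ w ∈ W ∧ w ≠ v ∧ G v w) {m : ℕ} {Y Y' : Set (Finset V)}
    (hY : Y ⊆ cliquesIn G N) (h : AStep m Y Y') :
    AStep (m + 1) (liftK G W N v Y) (liftK G W N v Y') := by
  obtain ⟨ρ, w, ⟨hwρ, hcard, hρY, hinsY, hmax⟩, rfl⟩ := h
  have hρN : ρ ∈ cliquesIn G N := hY hρY
  have hinsN : insert w ρ ∈ cliquesIn G N := hY hinsY
  have hwN : w ∈ N := hinsN.1 (Finset.mem_insert_self w ρ)
  have hwv : w ≠ v := fun h => hvN (h ▸ hwN)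
  have hvρ : v ∉ ρ := fun h => hvN (hρN.1 h)
  refine ⟨insert v ρ, w, ⟨?_, ?_, ?_, ?_, ?_⟩, ?_⟩
  · -- w ∉ insert v ρ
    simp only [Finset.mem_insert]
    rintro (rfl | h)
    · exact hwv rfl
    · exact hwρ h
  · -- card
    rw [Finset.card_insert_of_notMem hvρ]; omega
  · -- insert v ρ ∈ liftK ... Y
    refine ⟨insert_v_clique hsym hvW hN hρN, ?_⟩
    rintro ⟨-, he⟩
    rw [Finset.erase_insert hvρ] at he
    exact he.2 hρY
  · -- insert w (insert v ρ) ∈ liftK ... Y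
    rw [Finset.insert_comm]
    refine ⟨insert_v_clique hsym hvW hN hinsN, ?_⟩
    rintro ⟨-, he⟩
    have hv' : v ∉ insert w ρ := by
      simp only [Finset.mem_insert]
      rintro (rfl | h)
      · exact hwv rfl
      · exact hvρ h
    rw [Finset.erase_insert hv'] at he
    exact he.2 hinsY
  · -- maximality transfer
    intro η hηmax hsub
    obtain ⟨⟨hηX, hηnr⟩, hmaxcond⟩ := hηmax
    have hvη : v ∈ η := hsub (Finset.mem_insert_self v ρ)
    have heN : η.erase v ∈ cliquesIn G N := erase_mem_linkcliques hsym hN hηX hvη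
    have heY : η.erase v ∈ Y := by
      by_contra hc
      exact hηnr ⟨hvη, heN, hc⟩
    have hρe : ρ ⊆ η.erase v :=
      (Finset.subset_erase).2 ⟨(Finset.subset_insert v ρ).trans hsub, hvρ⟩
    have hemax : IsMaximalFace Y (η.erase v) := by
      refine ⟨heY, fun ζ hζ hζsub => ?_⟩
      have hζN : ζ ∈ cliquesIn G N := hY hζ
      have hins : insert v ζ ∈ liftK G W N v Y := by
        refine ⟨insert_v_clique hsym hvW hN hζN, ?_⟩
        rintro ⟨-, he⟩
        rw [Finset.erase_insert (fun h => hvN (hζN.1 h))] at he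
        exact he.2 hζ
      have hηsub : η ⊆ insert v ζ := by
        intro u hu
        by_cases huv : u = v
        · exact huv ▸ Finset.mem_insert_self v ζ
        · exact Finset.mem_insert_of_mem (hζsub (Finset.mem_erase.2 ⟨huv, hu⟩))
      have := hmaxcond (insert v ζ) hins hηsub
      have hveq : (insert v ζ).erase v = η.erase v := by rw [this]
      rwa [Finset.erase_insert (fun h => hvN (hζN.1 h))] at hveq
    have := hmax (η.erase v) hemax hρe
    -- η = insert w (insert v ρ)
    rw [Finset.insert_comm, ← this]
    exact (Finset.insert_erase hvη).symm
  · -- state equality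
    ext η
    constructor
    · rintro ⟨hηX, hnr⟩
      refine ⟨⟨hηX, ?_⟩, ?_⟩
      · rintro ⟨hvη, heN, heY⟩
        exact hnr ⟨hvη, heN, fun h => heY h.1⟩
      · rintro ⟨h1, h2⟩
        have hvη : v ∈ η := h1 (Finset.mem_insert_self v ρ)
        have heN : η.erase v ∈ cliquesIn G N := erase_mem_linkcliques hsym hN hηX hvη
        have hρe : ρ ⊆ η.erase v :=
          (Finset.subset_erase).2 ⟨((Finset.subset_insert v ρ).trans h1), hvρ⟩
        have he2 : η.erase v ⊆ insert w ρ := by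
          intro u hu
          obtain ⟨huv, huη⟩ := Finset.mem_erase.1 hu
          have := h2 huη
          rw [Finset.insert_comm] at this
          rcases Finset.mem_insert.1 this with rfl | hh
          · exact absurd rfl huv
          · exact hh
        exact hnr ⟨hvη, heN, fun hc => hc.2 ⟨hρe, he2⟩⟩
    · rintro ⟨⟨hηX, hnr⟩, hnI⟩
      refine ⟨hηX, ?_⟩
      rintro ⟨hvη, heN, hnYI⟩
      have heY : η.erase v ∈ Y := by
        by_contra hc; exact hnr ⟨hvη, heN, hc⟩
      have heI : ρ ⊆ η.erase v ∧ η.erase v ⊆ insert w ρ := by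
        by_contra hc; exact hnYI ⟨heY, hc⟩
      obtain ⟨h1, h2⟩ := heI
      refine hnI ⟨?_, ?_⟩
      · intro u hu
        rcases Finset.mem_insert.1 hu with rfl | hu'
        · exact hvη
        · exact Finset.erase_subset v η (h1 hu')
      · intro u hu
        by_cases huv : u = v
        · rw [huv, Finset.insert_comm]; exact Finset.mem_insert_self v _
        · have := h2 (Finset.mem_erase.2 ⟨huv, hu⟩)
          rw [Finset.insert_comm]
          exact Finset.mem_insert_of_mem this

end Lift
section Glue
set_option linter.unusedSectionVars false

variable {V : Type*} [DecidableEq V] [Fintype V]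
variable {G : V → V → Prop} {W N : Finset V} {v : V}

lemma lift_rtg (hsym : ∀ a b, G a b → G b a) (hvW : v ∈ W) (hvN : v ∉ N)
    (hN : ∀ w, w ∈ N ↔ w ∈ W ∧ w ≠ v ∧ G v w) {m : ℕ} {Y F : Set (Finset V)}
    (hY : Y ⊆ cliquesIn G N) (h : Relation.ReflTransGen (AStep m) Y F) :
    Relation.ReflTransGen (AStep (m + 1)) (liftK G W N v Y) (liftK G W N v F) := by
  induction h with
  | refl => exact Relation.ReflTransGen.refl
  | tail h1 hstep ih =>
      exact ih.tail (lift_step hsym hvW hvN hN ((rtg_astep_subset h1).trans hY) hstep)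

lemma liftK_top : liftK G W N v (cliquesIn G N) = cliquesIn G W := by
  ext η; simp [liftK]

lemma liftK_decomp (hsym : ∀ a b, G a b → G b a)
    (hN : ∀ w, w ∈ N ↔ w ∈ W ∧ w ≠ v ∧ G v w) {F : Set (Finset V)} :
    liftK G W N v F =
      cliquesIn G (W.erase v) ∪ {η | η ∈ cliquesIn G W ∧ v ∈ η ∧ η.erase v ∈ F} := by
  ext η
  constructor
  · rintro ⟨hηX, hnr⟩
    by_cases hv : v ∈ η
    · refine Or.inr ⟨hηX, hv, ?_⟩
      by_contra hc
      exact hnr ⟨hv, erase_mem_linkcliques hsym hN hηX hv, hc⟩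
    · refine Or.inl ⟨fun u hu => Finset.mem_erase.2 ⟨fun h => hv (h ▸ hu), hηX.1 hu⟩, hηX.2⟩
  · rintro (⟨hηW, hηclq⟩ | ⟨hηX, hv, heF⟩)
    · have hvη : v ∉ η := fun h => Finset.notMem_erase v W (hηW h)
      exact ⟨⟨hηW.trans (Finset.erase_subset v W), hηclq⟩, fun hc => hvη hc.1⟩
    · exact ⟨hηX, fun hc => hc.2.2 heF⟩

lemma junk_step {m : ℕ} {K K' J : Set (Finset V)} (hJcard : ∀ j ∈ J, j.card ≤ m)
    (hJK : ∀ j ∈ J, j ∉ K) (h : AStep m K K') : AStep m (K ∪ J) (K' ∪ J) := by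
  obtain ⟨ρ, w, ⟨hw, hc, hρ, hins, hmax⟩, rfl⟩ := h
  have key : ∀ j ∈ J, ¬ ρ ⊆ j := by
    intro j hj hsub
    have : ρ = j := Finset.eq_of_subset_of_card_le hsub (le_trans (hJcard j hj) hc)
    exact hJK j hj (this ▸ hρ)
  refine ⟨ρ, w, ⟨hw, hc, Or.inl hρ, Or.inl hins, ?_⟩, ?_⟩
  · intro η hηmax hsub
    rcases hηmax.1 with hηK | hηJ
    · have : IsMaximalFace K η := ⟨hηK, fun ζ hζ hζsub => hηmax.2 ζ (Or.inl hζ) hζsub⟩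
      exact hmax η this hsub
    · exact absurd hsub (key η hηJ)
  · ext η
    constructor
    · rintro (⟨hη, hnI⟩ | hη)
      · exact ⟨Or.inl hη, hnI⟩
      · exact ⟨Or.inr hη, fun hI => key η hη hI.1⟩
    · rintro ⟨hη | hη, hnI⟩
      · exact Or.inl ⟨hη, hnI⟩
      · exact Or.inr hη

lemma junk_rtg {m : ℕ} {K K' J : Set (Finset V)} (hJcard : ∀ j ∈ J, j.card ≤ m)
    (hJK : ∀ j ∈ J, j ∉ K) (h : Relation.ReflTransGen (AStep m) K K') :
    Relation.ReflTransGen (AStep m) (K ∪ J) (K' ∪ J) := by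
  induction h with
  | refl => exact Relation.ReflTransGen.refl
  | tail h1 hstep ih =>
      exact ih.tail (junk_step hJcard
        (fun j hj hjK => hJK j hj (rtg_astep_subset h1 hjK)) hstep)

end Glue
section Main
set_option linter.unusedSectionVars false

variable {V : Type*} [DecidableEq V] [Fintype V]

lemma conestep_astep {m : ℕ} {x : V} {K K' : Set (Finset V)}
    (h : ConeStep m x K K') : AStep m K K' := by
  obtain ⟨ρ, hg, rfl⟩ := h; exact ⟨ρ, x, hg, rfl⟩

lemma empty_case (G : V → V → Prop) (m : ℕ) :
    ∃ F, Relation.ReflTransGen (AStep m) (cliquesIn G (∅ : Finset V)) F ∧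
      ∀ σ ∈ F, σ.card ≤ m := by
  refine ⟨cliquesIn G ∅, Relation.ReflTransGen.refl, ?_⟩
  rintro σ ⟨hσ, -⟩
  simp [Finset.subset_empty.1 hσ]

lemma main_clq (G : V → V → Prop) (hsym : ∀ a b, G a b → G b a) :
    ∀ (n m : ℕ) (W : Finset V), W.card ≤ n → W.card ≤ 2 * m + 1 →
    ∃ F, Relation.ReflTransGen (AStep m) (cliquesIn G W) F ∧ ∀ σ ∈ F, σ.card ≤ m := by
  intro n
  induction n with
  | zero =>
    intro m W hn _
    have hW : W = ∅ := Finset.card_eq_zero.1 (le_antisymm hn (Nat.zero_le _))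
    subst hW
    exact empty_case G m
  | succ n ih =>
    intro m W hn hm
    by_cases hA : ∃ x ∈ W, ∀ y ∈ W, y ≠ x → G x y
    · obtain ⟨x, hx, hdom⟩ := hA
      obtain ⟨F, hF, hFc⟩ := cone_collapse (m := m) hsym hx hdom
      exact ⟨F, Relation.ReflTransGen.mono (fun _ _ => conestep_astep) _ _ hF, hFc⟩
    · push_neg at hA
      rcases Finset.eq_empty_or_nonempty W with rfl | ⟨v, hv⟩
      · exact empty_case G m
      obtain ⟨y, hy, hyv, hGvy⟩ := hA v hv
      classical
      set N := W.filter (fun w => w ≠ v ∧ G v w) with hNdef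
      have hN : ∀ w, w ∈ N ↔ w ∈ W ∧ w ≠ v ∧ G v w := by
        intro w; simp [hNdef]
      have hvN : v ∉ N := by
        intro h; exact ((hN v).1 h).2.1 rfl
      have hyN : y ∉ N := fun h => hGvy ((hN y).1 h).2.2
      have hNsub : N ⊆ (W.erase v).erase y := by
        intro w hw
        obtain ⟨hwW, hwv, -⟩ := (hN w).1 hw
        exact Finset.mem_erase.2 ⟨fun h => hyN (h ▸ hw), Finset.mem_erase.2 ⟨hwv, hwW⟩⟩
      have hNcard : N.card + 2 ≤ W.card := by
        have h1 : ((W.erase v).erase y).card = W.card - 2 := by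
          rw [Finset.card_erase_of_mem (Finset.mem_erase.2 ⟨hyv, hy⟩),
            Finset.card_erase_of_mem hv]
          omega
        have h2 : N.card ≤ ((W.erase v).erase y).card := Finset.card_le_card hNsub
        have h3 : 2 ≤ W.card := Finset.one_lt_card.2 ⟨v, hv, y, hy, fun h => hyv h.symm⟩
        omega
      have hm1 : 1 ≤ m := by
        have : 2 ≤ W.card := by omega
        omega
      obtain ⟨Fl, hFl, hFlc⟩ := ih (m - 1) N (by omega) (by omega)
      have hlift := lift_rtg (W := W) hsym hv hvN hN subset_rfl hFl
      rw [liftK_top] at hlift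
      have hm' : m - 1 + 1 = m := by omega
      rw [hm'] at hlift
      have hFlN : Fl ⊆ cliquesIn G N := rtg_astep_subset hFl
      rw [liftK_decomp hsym hN] at hlift
      set J := {η | η ∈ cliquesIn G W ∧ v ∈ η ∧ η.erase v ∈ Fl} with hJdef
      have hJcard : ∀ j ∈ J, j.card ≤ m := by
        rintro j ⟨hjX, hvj, hje⟩
        have h1 := hFlc _ hje
        have h2 := Finset.card_erase_add_one hvj
        omega
      have hJK : ∀ j ∈ J, j ∉ cliquesIn G (W.erase v) := by
        rintro j ⟨hjX, hvj, -⟩ hjc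
        exact Finset.notMem_erase v W (hjc.1 hvj)
      obtain ⟨F2, hF2, hF2c⟩ := ih m (W.erase v)
        (by rw [Finset.card_erase_of_mem hv]; omega)
        (by rw [Finset.card_erase_of_mem hv]; omega)
      have hjunk := junk_rtg hJcard hJK hF2
      refine ⟨F2 ∪ J, hlift.trans hjunk, ?_⟩
      rintro σ (h | h)
      · exact hF2c σ h
      · exact hJcard σ h

end Main
section Theorem
set_option linter.unusedSectionVars false

variable {V : Type*} [DecidableEq V] [Fintype V]

lemma deg_bound {S : Set (Finset V)} {a b : V} (hab : a ≠ b)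
    (hb : ∀ z, z ≠ a → ({a, z} : Finset V) ∈ S → z ≠ b) :
    degreeIn S a ≤ Fintype.card V - 2 := by
  have hsub : {w : V | w ≠ a ∧ ({a, w} : Finset V) ∈ S} ⊆ ({a, b}ᶜ : Set V) := by
    rintro z ⟨hza, hz⟩
    simp only [Set.mem_compl_iff, Set.mem_insert_iff, Set.mem_singleton_iff]
    push_neg
    exact ⟨hza, hb z hza hz⟩
  have h1 : degreeIn S a ≤ ({a, b}ᶜ : Set V).ncard :=
    Set.ncard_le_ncard hsub (Set.toFinite _)
  have h2 : ({a, b} : Set V).ncard + ({a, b}ᶜ : Set V).ncard = Fintype.card V := by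
    rw [Set.ncard_add_ncard_compl, Nat.card_eq_fintype_card]
  have h3 : ({a, b} : Set V).ncard = 2 := Set.ncard_pair hab
  omega

theorem cliqueComplex_on_few_vertices_collapsible_aux
    (k : ℕ) (hk : 1 ≤ k) (L : Set (Finset V)) (hL : IsCliqueComplex L) (hfin : L.Finite)
    (hcard : Fintype.card V ≤ 2 * k + 1) :
    Collapsible k L ∧
    ((∃ u v : V, u ≠ v ∧ ({u, v} : Finset V) ∉ L) →
      ∀ S : Set (Finset V), S ⊆ L → IsComplex S → IsPure S k → StronglyConnected S k →
        ∃ w : V, ({w} : Finset V) ∈ S ∧ degreeIn S w ≤ 2 * k - 1) ∧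
    ((Fintype.card V = 2 * k + 1 ∧ ∀ u v : V, u ≠ v → ({u, v} : Finset V) ∈ L) →
      L = {τ : Finset V | τ.Nonempty} ∧
      ∃ x : V, ∃ K' : Set (Finset V),
        Relation.ReflTransGen
          (fun K K'' : Set (Finset V) => ∃ σ : Finset V,
            IsFreeFace K σ (insert x σ) ∧ K'' = K \ {η | σ ⊆ η ∧ η ⊆ insert x σ})
          L K' ∧
        ∀ σ ∈ K', σ.card ≤ k) := by
  classical
  refine ⟨?_, ?_, ?_⟩
  · -- Part 1 : Collapsibility
    set G : V → V → Prop := fun u v => u ≠ v ∧ ({u, v} : Finset V) ∈ L with hGdef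
    have hsym : ∀ a b, G a b → G b a := by
      rintro a b ⟨hab, hmem⟩
      exact ⟨hab.symm, by rwa [Finset.pair_comm]⟩
    set W : Finset V := Finset.univ.filter (fun u => ({u} : Finset V) ∈ L) with hWdef
    have hWmem : ∀ u, u ∈ W ↔ ({u} : Finset V) ∈ L := by
      intro u; simp [hWdef]
    have hLW : L = cliquesIn G W \ {∅} := by
      ext σ
      constructor
      · intro hσ
        have hne : σ.Nonempty := hL.1.1 σ hσ
        refine ⟨⟨?_, ?_⟩, by simp [hne.ne_empty]⟩
        · intro u hu
          exact (hWmem u).2 (hL.1.2 σ hσ {u} (Finset.singleton_subset_iff.2 hu)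
            (Finset.singleton_nonempty u))
        · intro u hu w hw huw
          refine ⟨huw, hL.1.2 σ hσ {u, w} ?_ ⟨u, Finset.mem_insert_self u {w}⟩⟩
          exact Finset.insert_subset hu (Finset.singleton_subset_iff.2 hw)
      · rintro ⟨⟨hσW, hσclq⟩, hσne⟩
        have hne : σ.Nonempty := Finset.nonempty_iff_ne_empty.2 (by simpa using hσne)
        refine hL.2 σ hne ?_
        intro τ hτσ hτne hτ2
        have h1 : 1 ≤ τ.card := hτne.card_pos
        interval_cases h : τ.card
        · obtain ⟨u, rfl⟩ := Finset.card_eq_one.1 h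
          exact (hWmem u).1 (hσW (hτσ (Finset.mem_singleton_self u)))
        · obtain ⟨u, w, huw, rfl⟩ := Finset.card_eq_two.1 h
          exact (hσclq u (hτσ (Finset.mem_insert_self u {w})) w
            (hτσ (Finset.mem_insert_of_mem (Finset.mem_singleton_self w))) huw).2
    have hWcard : W.card ≤ 2 * k + 1 := le_trans (Finset.card_le_univ W) hcard
    obtain ⟨F, hF, hFc⟩ := main_clq G hsym W.card k W le_rfl hWcard
    refine ⟨F \ {∅}, ?_, fun σ hσ => hFc σ hσ.1⟩
    rw [CollapsesTo, hLW]
    exact Relation.ReflTransGen.lift (fun K => K \ {∅})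
      (fun a b hab => astep_collapseStep hk hab) _ _ hF
  · -- Part (i)
    rintro ⟨u0, v0, hu0v0, hnedge⟩ S hSL hcomp hpure hsc
    have hsing : ∀ σ ∈ S, ∀ u ∈ σ, ({u} : Finset V) ∈ S := by
      intro σ hσ u hu
      exact hcomp.2 σ hσ {u} (Finset.singleton_subset_iff.2 hu) (Finset.singleton_nonempty u)
    have hbound : Fintype.card V - 2 ≤ 2 * k - 1 := by omega
    by_cases h : ({u0} : Finset V) ∈ S
    · refine ⟨u0, h, le_trans (deg_bound hu0v0 ?_) hbound⟩
      intro z hz hmem heq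
      rw [heq] at hmem
      exact hnedge (hSL hmem)
    · obtain ⟨σ0, hσ0⟩ := hpure.1
      obtain ⟨u, hu⟩ := hcomp.1 σ0 hσ0
      have huS : ({u} : Finset V) ∈ S := hsing σ0 hσ0 u hu
      have huu0 : u ≠ u0 := by
        rintro rfl; exact h huS
      refine ⟨u, huS, le_trans (deg_bound huu0 ?_) hbound⟩
      intro z hz hmem heq
      rw [heq] at hmem
      refine h (hcomp.2 _ hmem {u0} ?_ (Finset.singleton_nonempty u0))
      exact Finset.singleton_subset_iff.2 (Finset.mem_insert_of_mem
        (Finset.mem_singleton_self u0))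
  · -- Part (ii)
    rintro ⟨hcardV, hedges⟩
    have hLall : L = {τ : Finset V | τ.Nonempty} := by
      ext τ
      constructor
      · exact fun h => hL.1.1 τ h
      · intro hne
        refine hL.2 τ hne ?_
        intro τ' hτ' hτ'ne hτ'2
        have h1 : 1 ≤ τ'.card := hτ'ne.card_pos
        interval_cases h : τ'.card
        · obtain ⟨u, rfl⟩ := Finset.card_eq_one.1 h
          have h3 : 1 < Fintype.card V := by omega
          obtain ⟨v, hv⟩ := Fintype.exists_ne_of_one_lt_card h3 u
          have := hedges u v (fun hh => hv hh.symm)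
          exact hL.1.2 _ this {u} (Finset.singleton_subset_iff.2
            (Finset.mem_insert_self u {v})) (Finset.singleton_nonempty u)
        · obtain ⟨a, b, hab, rfl⟩ := Finset.card_eq_two.1 h
          exact hedges a b hab
    refine ⟨hLall, ?_⟩
    have hVne : Nonempty V := by
      rw [← Fintype.card_pos_iff]; omega
    obtain ⟨x⟩ := hVne
    set G : V → V → Prop := fun a b => a ≠ b with hGdef
    have hsym : ∀ a b, G a b → G b a := fun a b h => h.symm
    have hdom : ∀ y ∈ (Finset.univ : Finset V), y ≠ x → G x y :=
      fun y _ hyx => hyx.symm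
    obtain ⟨F, hF, hFc⟩ := cone_collapse (m := k) hsym (Finset.mem_univ x) hdom
    have huniv : cliquesIn G (Finset.univ : Finset V) = Set.univ := by
      ext σ; simp [cliquesIn, IsClq, hGdef]
    rw [huniv] at hF
    have hLuniv : L = (Set.univ : Set (Finset V)) \ {∅} := by
      rw [hLall]; ext τ
      simp [Finset.nonempty_iff_ne_empty]
    refine ⟨x, F \ {∅}, ?_, fun σ hσ => hFc σ hσ.1⟩
    rw [hLuniv]
    exact Relation.ReflTransGen.lift (fun K => K \ {∅})
      (fun a b hab => conestep_rel hk hab) _ _ hF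

end Theorem


/-- Fix `k ≥ 1`. Every finite clique complex `L` on at most `2k + 1`
vertices is `k`-collapsible. In particular: (i) if the 1-skeleton of `L` is a proper
subgraph of the complete graph on the `2k + 1` vertices (some pair of distinct vertices
is not an edge of `L`), then every strongly connected, pure `k`-dimensional subcomplex of
`L` contains a vertex of degree at most `2k - 1`; and (ii) if the 1-skeleton of `L` is the
complete graph `K_{2k+1}`, then `L` is the `2k`-dimensional simplex on its vertex set and
collapses, via collapses of intervals `[σ, σ ∪ {x}]` over a fixed cone vertex `x`, to a
complex of dimension at most `k - 1`. -/
theorem cliqueComplex_on_few_vertices_collapsible {V : Type*} [DecidableEq V] [Fintype V]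
    (k : ℕ) (hk : 1 ≤ k) (L : Set (Finset V)) (hL : IsCliqueComplex L) (hfin : L.Finite)
    (hcard : Fintype.card V ≤ 2 * k + 1) :
    Collapsible k L ∧
    ((∃ u v : V, u ≠ v ∧ ({u, v} : Finset V) ∉ L) →
      ∀ S : Set (Finset V), S ⊆ L → IsComplex S → IsPure S k → StronglyConnected S k →
        ∃ w : V, ({w} : Finset V) ∈ S ∧ degreeIn S w ≤ 2 * k - 1) ∧
    ((Fintype.card V = 2 * k + 1 ∧ ∀ u v : V, u ≠ v → ({u, v} : Finset V) ∈ L) →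
      L = {τ : Finset V | τ.Nonempty} ∧
      ∃ x : V, ∃ K' : Set (Finset V),
        Relation.ReflTransGen
          (fun K K'' : Set (Finset V) => ∃ σ : Finset V,
            IsFreeFace K σ (insert x σ) ∧ K'' = K \ {η | σ ⊆ η ∧ η ⊆ insert x σ})
          L K' ∧
        ∀ σ ∈ K', σ.card ≤ k) := by
  exact cliqueComplex_on_few_vertices_collapsible_aux k hk L hL hfin hcard
end
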